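/- arXiv:1611.07097 — 12 statements merged into one kernel-verified Lean document; each statement's English description precedes it below -/
import Mathlib

section
/- Block Lyapunov/Sylvester identity: Suppose Γ_L Zᴴ + Z Γ_L = XXᴴ − YYᴴ, Γ_R W + Wᴴ Γ_R = UᴴU − VᴴV, and ΓW − ZΓ = XV − YU. Then, with 𝚪 := [[Γ_L, Γ],[Γᴴ, Γ_R]], A := [[−Zᴴ, 0],[0, W]], C := [[−Xᴴ, V],[−Yᴴ, U]], and J := diag(I_p, −I_m), one has 𝚪A + Aᴴ𝚪 = −CᴴJC. -/
open Matrix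
open scoped Matrix

/-- **Block Lyapunov/Sylvester identity.**
If `Γ_L Zᴴ + Z Γ_L = XXᴴ − YYᴴ`, `Γ_R W + Wᴴ Γ_R = UᴴU − VᴴV` and `ΓW − ZΓ = XV − YU`,
then with `Gbig = [[Γ_L, Γ],[Γᴴ, Γ_R]]`, `A = [[−Zᴴ, 0],[0, W]]`, `C = [[−Xᴴ, V],[−Yᴴ, U]]`
and `J = diag(I_p, −I_m)`, one has `GbigA + AᴴGbig = −CᴴJC`. -/
theorem block_lyapunov_sylvester_identity
    (p m nZ nW : ℕ)
    (Z : Matrix (Fin nZ) (Fin nZ) ℂ) (W : Matrix (Fin nW) (Fin nW) ℂ)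
    (X : Matrix (Fin nZ) (Fin p) ℂ) (Y : Matrix (Fin nZ) (Fin m) ℂ)
    (U : Matrix (Fin m) (Fin nW) ℂ) (V : Matrix (Fin p) (Fin nW) ℂ)
    (ΓL : Matrix (Fin nZ) (Fin nZ) ℂ) (ΓR : Matrix (Fin nW) (Fin nW) ℂ)
    (Γ : Matrix (Fin nZ) (Fin nW) ℂ)
    (hL : ΓL * Zᴴ + Z * ΓL = X * Xᴴ - Y * Yᴴ)
    (hR : ΓR * W + Wᴴ * ΓR = Uᴴ * U - Vᴴ * V)
    (hS : Γ * W - Z * Γ = X * V - Y * U) :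
    let Gbig : Matrix (Fin nZ ⊕ Fin nW) (Fin nZ ⊕ Fin nW) ℂ := Matrix.fromBlocks ΓL Γ Γᴴ ΓR
    let A : Matrix (Fin nZ ⊕ Fin nW) (Fin nZ ⊕ Fin nW) ℂ := Matrix.fromBlocks (-Zᴴ) 0 0 W
    let C : Matrix (Fin p ⊕ Fin m) (Fin nZ ⊕ Fin nW) ℂ := Matrix.fromBlocks (-Xᴴ) V (-Yᴴ) U
    let J : Matrix (Fin p ⊕ Fin m) (Fin p ⊕ Fin m) ℂ := Matrix.fromBlocks 1 0 0 (-1)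
    Gbig * A + Aᴴ * Gbig = -(Cᴴ * J * C) := by
  intro Gbig A C J
  have hS' := congrArg conjTranspose hS
  simp only [conjTranspose_sub, conjTranspose_mul, conjTranspose_conjTranspose] at hS'
  simp only [Gbig, A, C, J, Matrix.fromBlocks_conjTranspose, Matrix.fromBlocks_multiply,
    Matrix.fromBlocks_add, Matrix.fromBlocks_neg, conjTranspose_neg, conjTranspose_zero,
    conjTranspose_conjTranspose]
  rw [Matrix.fromBlocks_inj]
  refine ⟨?_, ?_, ?_, ?_⟩ <;>
    simp only [Matrix.mul_zero, Matrix.zero_mul, Matrix.mul_one, Matrix.one_mul, add_zero,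
      zero_add, Matrix.neg_mul, Matrix.mul_neg, neg_neg, neg_zero, neg_add_rev, neg_sub,
      sub_eq_add_neg]
  · have h := congrArg Neg.neg hL
    abel_nf at h ⊢; exact h
  · abel_nf at hS ⊢; exact hS
  · abel_nf at hS' ⊢; exact hS'
  · abel_nf at hR ⊢; exact hR
end

section
/- Fundamental identity for the resolvent realization (identity (ad1) of the paper): For all λ, ζ ∈ ℂ such that λI_n − A and ζI_n − A are invertible, J − Θ(λ) J Θ(ζ)ᴴ = (λ + conj(ζ)) · C (λI_n − A)⁻¹ Γ⁻¹ (conj(ζ) I_n − Aᴴ)⁻¹ Cᴴ. -/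
open Matrix
open scoped Matrix

/-- The signature matrix `J = diag(I_p, −I_m)`. -/
def signatureJ (p m : ℕ) : Matrix (Fin p ⊕ Fin m) (Fin p ⊕ Fin m) ℂ :=
  Matrix.fromBlocks 1 0 0 (-1)

/-- The realization `Θ(λ) = I − C (λI − A)⁻¹ Γ⁻¹ Cᴴ J`. -/
noncomputable def ThetaRealization (n p m : ℕ) (A : Matrix (Fin n) (Fin n) ℂ)
    (C : Matrix (Fin p ⊕ Fin m) (Fin n) ℂ) (Γ : Matrix (Fin n) (Fin n) ℂ) (lam : ℂ) :
    Matrix (Fin p ⊕ Fin m) (Fin p ⊕ Fin m) ℂ :=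
  1 - C * (lam • (1 : Matrix (Fin n) (Fin n) ℂ) - A)⁻¹ * Γ⁻¹ * Cᴴ * signatureJ p m

lemma signatureJ_mul_self (p m : ℕ) : signatureJ p m * signatureJ p m = 1 := by
  simp [signatureJ, Matrix.fromBlocks_multiply, ← Matrix.fromBlocks_one]

lemma signatureJ_conjTranspose (p m : ℕ) : (signatureJ p m)ᴴ = signatureJ p m := by
  simp [signatureJ, Matrix.fromBlocks_conjTranspose]

/-- **Fundamental identity for the resolvent realization** (identity (2.22) of the paper):
`J − Θ(λ) J Θ(ζ)ᴴ = (λ + conj ζ) · C (λI − A)⁻¹ Γ⁻¹ (conj(ζ) I − Aᴴ)⁻¹ Cᴴ`. -/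
theorem fundamental_identity_resolvent_realization
    (n p m : ℕ) (A : Matrix (Fin n) (Fin n) ℂ)
    (C : Matrix (Fin p ⊕ Fin m) (Fin n) ℂ) (Γ : Matrix (Fin n) (Fin n) ℂ)
    (hΓH : Γ.IsHermitian) (hΓinv : IsUnit Γ.det)
    (hLyap : Γ * A + Aᴴ * Γ = -(Cᴴ * signatureJ p m * C))
    (lam ζ : ℂ)
    (hlam : IsUnit (lam • (1 : Matrix (Fin n) (Fin n) ℂ) - A).det)
    (hζ : IsUnit (ζ • (1 : Matrix (Fin n) (Fin n) ℂ) - A).det) :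
    signatureJ p m -
        ThetaRealization n p m A C Γ lam * signatureJ p m *
          (ThetaRealization n p m A C Γ ζ)ᴴ =
      (lam + star ζ) •
        (C * (lam • (1 : Matrix (Fin n) (Fin n) ℂ) - A)⁻¹ * Γ⁻¹ *
          ((star ζ) • (1 : Matrix (Fin n) (Fin n) ℂ) - Aᴴ)⁻¹ * Cᴴ) := by
  have hB2H : (ζ • (1 : Matrix (Fin n) (Fin n) ℂ) - A)ᴴ
      = (star ζ) • (1 : Matrix (Fin n) (Fin n) ℂ) - Aᴴ := by
    simp
  have hTζ : (ThetaRealization n p m A C Γ ζ)ᴴ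
      = 1 - signatureJ p m * C * Γ⁻¹ *
          ((star ζ) • (1 : Matrix (Fin n) (Fin n) ℂ) - Aᴴ)⁻¹ * Cᴴ := by
    rw [ThetaRealization]
    simp only [Matrix.conjTranspose_sub, Matrix.conjTranspose_one, Matrix.conjTranspose_mul,
      Matrix.conjTranspose_nonsing_inv, Matrix.conjTranspose_conjTranspose,
      signatureJ_conjTranspose, hΓH.eq, hB2H, Matrix.mul_assoc]
  have hTlam : ThetaRealization n p m A C Γ lam
      = 1 - C * (lam • (1 : Matrix (Fin n) (Fin n) ℂ) - A)⁻¹ * Γ⁻¹ * Cᴴ * signatureJ p m := rfl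
  rw [hTlam, hTζ, ← hB2H]
  have hJJ := signatureJ_mul_self p m
  set J := signatureJ p m with hJ
  set B : Matrix (Fin n) (Fin n) ℂ := lam • 1 - A with hBdef
  set B2 : Matrix (Fin n) (Fin n) ℂ := ζ • 1 - A with hB2def
  have hBB' : B⁻¹ * B = 1 := Matrix.nonsing_inv_mul _ hlam
  have hdetB2H : IsUnit (B2ᴴ).det := by
    rw [Matrix.det_conjTranspose]; exact hζ.star
  have hSS : B2ᴴ * (B2ᴴ)⁻¹ = 1 := Matrix.mul_nonsing_inv _ hdetB2H
  have hGG : Γ * Γ⁻¹ = 1 := Matrix.mul_nonsing_inv _ hΓinv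
  have hGG' : Γ⁻¹ * Γ = 1 := Matrix.nonsing_inv_mul _ hΓinv
  set G := Γ⁻¹ with hGdef
  set R := B⁻¹ with hRdef
  set S := (B2ᴴ)⁻¹ with hSdef
  -- Key Lyapunov rewrite
  have hCJC : Cᴴ * J * C = -(Γ * A + Aᴴ * Γ) := by rw [hLyap, neg_neg]
  -- Expand the left-hand side
  have h1 : (1 - C * R * G * Cᴴ * J) * J = J - C * R * G * Cᴴ := by
    rw [sub_mul, one_mul, mul_assoc, hJJ, mul_one]
  have h2 : J * (J * C * G * S * Cᴴ) = C * G * S * Cᴴ := by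
    have e : J * C * G * S * Cᴴ = J * (C * G * S * Cᴴ) := by
      simp only [Matrix.mul_assoc]
    rw [e, ← mul_assoc, hJJ, one_mul]
  have hXY : (C * R * G * Cᴴ) * (J * C * G * S * Cᴴ)
      = C * R * G * (Cᴴ * J * C) * G * S * Cᴴ := by
    simp only [Matrix.mul_assoc]
  have expand : J - (1 - C * R * G * Cᴴ * J) * J * (1 - J * C * G * S * Cᴴ)
      = C * G * S * Cᴴ + C * R * G * Cᴴ - C * R * G * (Cᴴ * J * C) * G * S * Cᴴ := by
    calc J - (1 - C * R * G * Cᴴ * J) * J * (1 - J * C * G * S * Cᴴ)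
        = J - (J - C * R * G * Cᴴ) * (1 - J * C * G * S * Cᴴ) := by rw [h1]
      _ = J - (J - C * R * G * Cᴴ)
            + (J * (J * C * G * S * Cᴴ) - (C * R * G * Cᴴ) * (J * C * G * S * Cᴴ)) := by
          rw [mul_sub, mul_one, sub_mul]; abel
      _ = C * G * S * Cᴴ + C * R * G * Cᴴ - C * R * G * (Cᴴ * J * C) * G * S * Cᴴ := by
          rw [h2, hXY]; abel
  rw [expand]
  have hG2 : G * Γ * A * G + G * (Aᴴ * (Γ * G)) = A * G + G * Aᴴ := by
    rw [hGG', hGG, one_mul, mul_one]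
  have hmid : C * R * G * (Cᴴ * J * C) * G * S * Cᴴ = -(C * R * (A * G + G * Aᴴ) * S * Cᴴ) := by
    rw [hCJC]
    have e1 : C * R * G * (-(Γ * A + Aᴴ * Γ)) * G * S * Cᴴ
        = -(C * R * (G * Γ * A * G + G * (Aᴴ * (Γ * G))) * S * Cᴴ) := by
      simp only [Matrix.mul_neg, Matrix.neg_mul, Matrix.mul_add, Matrix.add_mul, Matrix.mul_assoc, neg_inj]
    rw [e1, hG2]
  rw [hmid, sub_neg_eq_add]
  have hCG : C * G * S * Cᴴ = C * R * (B * G) * S * Cᴴ := by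
    have e : C * R * (B * G) * S * Cᴴ = C * (R * B) * G * S * Cᴴ := by
      simp only [Matrix.mul_assoc]
    rw [e, hBB', Matrix.mul_one]
  have hCRG : C * R * G * Cᴴ = C * R * (G * B2ᴴ) * S * Cᴴ := by
    have e : C * R * (G * B2ᴴ) * S * Cᴴ = C * R * G * (B2ᴴ * S) * Cᴴ := by
      simp only [Matrix.mul_assoc]
    rw [e, hSS, Matrix.mul_one]
  rw [hCG, hCRG]
  have hsum : B * G + G * B2ᴴ + (A * G + G * Aᴴ) = (lam + star ζ) • G := by
    rw [hBdef, hB2H]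
    simp only [sub_mul, mul_sub, Matrix.smul_mul, Matrix.mul_smul, one_mul, mul_one, add_smul]
    abel
  calc C * R * (B * G) * S * Cᴴ + C * R * (G * B2ᴴ) * S * Cᴴ + C * R * (A * G + G * Aᴴ) * S * Cᴴ
      = C * R * (B * G + G * B2ᴴ + (A * G + G * Aᴴ)) * S * Cᴴ := by
        simp only [Matrix.mul_add, Matrix.add_mul, Matrix.mul_assoc]
    _ = C * R * ((lam + star ζ) • G) * S * Cᴴ := by rw [hsum]
    _ = (lam + star ζ) • (C * R * G * S * Cᴴ) := by
        simp only [Matrix.mul_smul, Matrix.smul_mul]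
end

section
/- J-unitarity of Θ on the imaginary axis: For every λ ∈ ℂ with Re λ = 0 such that λI_n − A is invertible, Θ(λ) J Θ(λ)ᴴ = J and Θ(λ)ᴴ J Θ(λ) = J. -/
open Matrix
open scoped Matrix

section aux

variable {N : Type*} [Fintype N] [DecidableEq N]

lemma cancel1 (X Y J : Matrix N N ℂ) (h1 : J * J = 1) (h2 : X * J * Y = X + Y) :
    (1 - X * J) * J * (1 - J * Y) = J := by
  have e : (1 - X * J) * J * (1 - J * Y)
      = J - X * (J * J) - (J * J) * Y + X * J * ((J * J) * Y) := by noncomm_ring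
  rw [e, h1, mul_one, one_mul, h2]
  abel

lemma cancel2 (X Y J : Matrix N N ℂ) (h2 : Y * J * X = X + Y) :
    (1 - J * Y) * J * (1 - X * J) = J := by
  have e : (1 - J * Y) * J * (1 - X * J)
      = J - J * (X * J) - J * (Y * J) + J * ((Y * J * X) * J) := by noncomm_ring
  rw [e, h2]
  noncomm_ring

end aux

/-- **`J`-unitarity of `Θ` on the imaginary axis**: for purely imaginary `λ` at which
`λI − A` is invertible, `Θ(λ) J Θ(λ)ᴴ = J` and `Θ(λ)ᴴ J Θ(λ) = J`. -/
theorem theta_J_unitary_on_imaginary_axis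
    (n p m : ℕ) (A : Matrix (Fin n) (Fin n) ℂ)
    (C : Matrix (Fin p ⊕ Fin m) (Fin n) ℂ) (Γ : Matrix (Fin n) (Fin n) ℂ)
    (hΓH : Γ.IsHermitian) (hΓinv : IsUnit Γ.det)
    (hLyap : Γ * A + Aᴴ * Γ = -(Cᴴ * signatureJ p m * C))
    (lam : ℂ) (hre : lam.re = 0)
    (hlam : IsUnit (lam • (1 : Matrix (Fin n) (Fin n) ℂ) - A).det) :
    ThetaRealization n p m A C Γ lam * signatureJ p m *
        (ThetaRealization n p m A C Γ lam)ᴴ = signatureJ p m ∧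
      (ThetaRealization n p m A C Γ lam)ᴴ * signatureJ p m *
        ThetaRealization n p m A C Γ lam = signatureJ p m := by
  have hJH : (signatureJ p m)ᴴ = signatureJ p m := by
    simp [signatureJ, fromBlocks_conjTranspose]
  have hJJ : signatureJ p m * signatureJ p m = 1 := by
    simp [signatureJ, fromBlocks_multiply, ← fromBlocks_one]
  simp only [ThetaRealization]
  set B := lam • (1 : Matrix (Fin n) (Fin n) ℂ) - A with hB
  set R := B⁻¹ with hRdef
  set G := Γ⁻¹ with hGdef
  have hBR : B * R = 1 := mul_nonsing_inv B hlam
  have hRB : R * B = 1 := nonsing_inv_mul B hlam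
  have hΓG : Γ * G = 1 := mul_nonsing_inv Γ hΓinv
  have hGΓ : G * Γ = 1 := nonsing_inv_mul Γ hΓinv
  have hGH : Gᴴ = G := by rw [hGdef, conjTranspose_nonsing_inv, hΓH.eq]
  have hstar : star lam = -lam := by
    simp [Complex.ext_iff, Complex.star_def, hre]
  have hBH : Bᴴ = (-lam) • (1 : Matrix (Fin n) (Fin n) ℂ) - Aᴴ := by
    rw [hB, conjTranspose_sub, conjTranspose_smul, conjTranspose_one, hstar]
  have hRBH : Rᴴ * Bᴴ = 1 := by rw [← conjTranspose_mul, hBR, conjTranspose_one]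
  have hBHR : Bᴴ * Rᴴ = 1 := by rw [← conjTranspose_mul, hRB, conjTranspose_one]
  have hCJC : Cᴴ * signatureJ p m * C = -(Γ * A + Aᴴ * Γ) := by rw [hLyap, neg_neg]
  have hmid : G * Bᴴ + B * G = -(A * G + G * Aᴴ) := by
    rw [hBH, hB]
    simp only [sub_mul, mul_sub, smul_mul_assoc, mul_smul_comm, one_mul, mul_one]
    module
  have hmid2 : Γ * A + Aᴴ * Γ = -(Bᴴ * Γ + Γ * B) := by
    rw [hBH, hB]
    simp only [sub_mul, mul_sub, smul_mul_assoc, mul_smul_comm, one_mul, mul_one]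
    module
  have key1 : R * (A * G + G * Aᴴ) * Rᴴ = -(R * G + G * Rᴴ) := by
    have h1 : R * G = R * (G * Bᴴ) * Rᴴ := by
      rw [mul_assoc R (G * Bᴴ) Rᴴ, mul_assoc G Bᴴ Rᴴ, hBHR, mul_one]
    have h2 : G * Rᴴ = R * (B * G) * Rᴴ := by
      rw [← mul_assoc R B G, hRB, one_mul]
    rw [show A * G + G * Aᴴ = -(G * Bᴴ + B * G) by rw [hmid, neg_neg], mul_neg, neg_mul]
    rw [mul_add, add_mul, ← h1, ← h2]
  have key2 : G * Rᴴ * (Γ * A + Aᴴ * Γ) * (R * G) = -(R * G + G * Rᴴ) := by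
    have t1 : G * Rᴴ * (Bᴴ * Γ) * (R * G) = R * G := by
      rw [mul_assoc G Rᴴ (Bᴴ * Γ), ← mul_assoc Rᴴ Bᴴ Γ, hRBH, one_mul, hGΓ, one_mul]
    have t2 : G * Rᴴ * (Γ * B) * (R * G) = G * Rᴴ := by
      rw [mul_assoc (G * Rᴴ) (Γ * B) (R * G), mul_assoc Γ B (R * G), ← mul_assoc B R G,
        hBR, one_mul, hΓG, mul_one]
    calc G * Rᴴ * (Γ * A + Aᴴ * Γ) * (R * G)
        = G * Rᴴ * (-(Bᴴ * Γ + Γ * B)) * (R * G) := by rw [hmid2]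
      _ = -(G * Rᴴ * (Bᴴ * Γ) * (R * G) + G * Rᴴ * (Γ * B) * (R * G)) := by
          rw [mul_neg, neg_mul, mul_add, add_mul]
      _ = -(R * G + G * Rᴴ) := by rw [t1, t2]
  have hXJY : (C * (R * G) * Cᴴ) * signatureJ p m * (C * (G * Rᴴ) * Cᴴ)
      = C * (R * G) * Cᴴ + C * (G * Rᴴ) * Cᴴ := by
    have e : (C * (R * G) * Cᴴ) * signatureJ p m * (C * (G * Rᴴ) * Cᴴ)
        = C * ((R * G) * (Cᴴ * signatureJ p m * C) * (G * Rᴴ)) * Cᴴ := by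
      simp only [Matrix.mul_add, Matrix.add_mul, Matrix.mul_assoc]
    have inner : (R * G) * (Γ * A + Aᴴ * Γ) * (G * Rᴴ) = R * (A * G + G * Aᴴ) * Rᴴ := by
      have e2 : (R * G) * (Γ * A + Aᴴ * Γ) * (G * Rᴴ)
          = R * ((G * Γ) * (A * (G * Rᴴ))) + R * (G * (Aᴴ * ((Γ * G) * Rᴴ))) := by
        simp only [Matrix.mul_add, Matrix.add_mul, Matrix.mul_assoc]
      rw [e2, hGΓ, hΓG, one_mul, one_mul]
      simp only [Matrix.mul_add, Matrix.add_mul, Matrix.mul_assoc]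
    rw [e, hCJC, mul_neg, neg_mul, inner, key1, neg_neg, Matrix.mul_add, Matrix.add_mul]
  have hYJX : (C * (G * Rᴴ) * Cᴴ) * signatureJ p m * (C * (R * G) * Cᴴ)
      = C * (R * G) * Cᴴ + C * (G * Rᴴ) * Cᴴ := by
    have e : (C * (G * Rᴴ) * Cᴴ) * signatureJ p m * (C * (R * G) * Cᴴ)
        = C * (G * Rᴴ * (Cᴴ * signatureJ p m * C) * (R * G)) * Cᴴ := by
      simp only [Matrix.mul_add, Matrix.add_mul, Matrix.mul_assoc]
    rw [e, hCJC, mul_neg, neg_mul, key2, neg_neg, Matrix.mul_add, Matrix.add_mul]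
  have hTH : (1 - C * (R * G) * Cᴴ * signatureJ p m)ᴴ
      = 1 - signatureJ p m * (C * (G * Rᴴ) * Cᴴ) := by
    simp only [conjTranspose_sub, conjTranspose_one, conjTranspose_mul,
      conjTranspose_conjTranspose, hGH, hJH, Matrix.mul_assoc]
  rw [Matrix.mul_assoc C R G, hTH]
  exact ⟨cancel1 _ _ _ hJJ hXJY, cancel2 _ _ _ hYJX⟩
end

section
/- J-bicontractivity of Θ on the right half-plane: Assume in addition that Γ is positive definite. Then for every λ ∈ ℂ with Re λ > 0 such that λI_n − A is invertible, both J − Θ(λ) J Θ(λ)ᴴ and J − Θ(λ)ᴴ J Θ(λ) are positive semidefinite. -/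
open Matrix
open scoped Matrix ComplexOrder

lemma my_smul_posSemidef {k : Type*} [Fintype k] {M : Matrix k k ℂ}
    (hM : M.PosSemidef) {c : ℂ} (hc : 0 ≤ c) : (c • M).PosSemidef := by
  have him : c.im = 0 := by
    have := (Complex.le_def.mp hc).2; simpa using this.symm
  have hstar : star c = c := by
    rw [Complex.star_def, Complex.conj_eq_iff_im]; exact him
  constructor
  · unfold Matrix.IsHermitian
    rw [conjTranspose_smul, hstar, hM.isHermitian.eq]
  · intro x
    have e : (x.sum fun i xi => x.sum fun j xj => star xi * (c • M) i j * xj) =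
        c * x.sum fun i xi => x.sum fun j xj => star xi * M i j * xj := by
      rw [Finsupp.mul_sum]
      refine Finsupp.sum_congr fun i _ => ?_
      rw [Finsupp.mul_sum]
      refine Finsupp.sum_congr fun j _ => ?_
      rw [Matrix.smul_apply, smul_eq_mul]
      ring
    rw [e]
    exact mul_nonneg hc (hM.2 x)

lemma my_aux1 {k l : Type*} [Fintype k] [Fintype l] [DecidableEq k] [DecidableEq l]
    (J : Matrix k k ℂ) (C : Matrix k l ℂ) (G Gi A B R : Matrix l l ℂ)
    (hJH : Jᴴ = J) (hJ2 : J * J = 1) (hGiH : Giᴴ = Gi)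
    (hRB : ∀ Z : Matrix l k ℂ, R * (B * Z) = Z) (hBR : ∀ Z : Matrix l k ℂ, B * (R * Z) = Z)
    (hRBh : ∀ Z : Matrix l k ℂ, Rᴴ * (Bᴴ * Z) = Z) (hBRh : ∀ Z : Matrix l k ℂ, Bᴴ * (Rᴴ * Z) = Z)
    (hG1 : ∀ Z : Matrix l k ℂ, Gi * (G * Z) = Z) (hG2 : ∀ Z : Matrix l k ℂ, G * (Gi * Z) = Z)
    (hKK : ∀ Z : Matrix l k ℂ, Cᴴ * (J * (C * Z)) = -(G * (A * Z)) - Aᴴ * (G * Z)) :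
    J - (1 - C * R * Gi * Cᴴ * J) * J * (1 - C * R * Gi * Cᴴ * J)ᴴ =
      (C * R) * ((B * Gi + A * Gi) + (Gi * Bᴴ + Gi * Aᴴ)) * (C * R)ᴴ := by
  have hJJ : ∀ Z : Matrix k k ℂ, J * (J * Z) = Z := fun Z => by
    rw [← Matrix.mul_assoc, hJ2, Matrix.one_mul]
  simp only [conjTranspose_sub, conjTranspose_mul, conjTranspose_one, hJH, hGiH,
    conjTranspose_conjTranspose]
  simp only [Matrix.mul_sub, Matrix.sub_mul, Matrix.mul_add, Matrix.add_mul,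
    Matrix.mul_one, Matrix.one_mul, Matrix.mul_assoc, hJ2, hJJ, hKK, hRB, hBR,
    hRBh, hBRh, hG1, hG2, Matrix.neg_mul, Matrix.mul_neg]
  abel

lemma my_aux2 {k l : Type*} [Fintype k] [Fintype l] [DecidableEq k] [DecidableEq l]
    (J : Matrix k k ℂ) (C : Matrix k l ℂ) (G Gi A B R : Matrix l l ℂ)
    (hJH : Jᴴ = J) (hJ2 : J * J = 1) (hGiH : Giᴴ = Gi)
    (hRB : ∀ Z : Matrix l k ℂ, R * (B * Z) = Z) (hBR : ∀ Z : Matrix l k ℂ, B * (R * Z) = Z)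
    (hRBh : ∀ Z : Matrix l k ℂ, Rᴴ * (Bᴴ * Z) = Z) (hBRh : ∀ Z : Matrix l k ℂ, Bᴴ * (Rᴴ * Z) = Z)
    (hG1 : ∀ Z : Matrix l k ℂ, Gi * (G * Z) = Z) (hG2 : ∀ Z : Matrix l k ℂ, G * (Gi * Z) = Z)
    (hKK : ∀ Z : Matrix l k ℂ, Cᴴ * (J * (C * Z)) = -(G * (A * Z)) - Aᴴ * (G * Z)) :
    J - (1 - C * R * Gi * Cᴴ * J)ᴴ * J * (1 - C * R * Gi * Cᴴ * J) =
      (J * C * Gi * Rᴴ) * ((G * B + G * A) + (Bᴴ * G + Aᴴ * G)) * (J * C * Gi * Rᴴ)ᴴ := by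
  have hJJ : ∀ Z : Matrix k k ℂ, J * (J * Z) = Z := fun Z => by
    rw [← Matrix.mul_assoc, hJ2, Matrix.one_mul]
  simp only [conjTranspose_sub, conjTranspose_mul, conjTranspose_one, hJH, hGiH,
    conjTranspose_conjTranspose]
  simp only [Matrix.mul_sub, Matrix.sub_mul, Matrix.mul_add, Matrix.add_mul,
    Matrix.mul_one, Matrix.one_mul, Matrix.mul_assoc, hJ2, hJJ, hKK, hRB, hBR,
    hRBh, hBRh, hG1, hG2, Matrix.neg_mul, Matrix.mul_neg]
  abel

set_option maxHeartbeats 800000 in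
/-- **`J`-bicontractivity of `Θ` on the right half-plane**: if moreover `Γ ≻ 0`, then for
every `λ` with `Re λ > 0` at which `λI − A` is invertible, both `J − Θ(λ) J Θ(λ)ᴴ` and
`J − Θ(λ)ᴴ J Θ(λ)` are positive semidefinite. -/
theorem theta_J_bicontractive_right_half_plane
    (n p m : ℕ) (A : Matrix (Fin n) (Fin n) ℂ)
    (C : Matrix (Fin p ⊕ Fin m) (Fin n) ℂ) (Γ : Matrix (Fin n) (Fin n) ℂ)
    (hΓH : Γ.IsHermitian) (hΓinv : IsUnit Γ.det) (hΓpos : Γ.PosDef)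
    (hLyap : Γ * A + Aᴴ * Γ = -(Cᴴ * signatureJ p m * C))
    (lam : ℂ) (hre : 0 < lam.re)
    (hlam : IsUnit (lam • (1 : Matrix (Fin n) (Fin n) ℂ) - A).det) :
    (signatureJ p m -
        ThetaRealization n p m A C Γ lam * signatureJ p m *
          (ThetaRealization n p m A C Γ lam)ᴴ).PosSemidef ∧
      (signatureJ p m -
        (ThetaRealization n p m A C Γ lam)ᴴ * signatureJ p m *
          ThetaRealization n p m A C Γ lam).PosSemidef := by
  have hJH : (signatureJ p m)ᴴ = signatureJ p m := by
    simp [signatureJ, fromBlocks_conjTranspose]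
  have hJ2 : signatureJ p m * signatureJ p m = 1 := by
    simp [signatureJ, fromBlocks_multiply, ← fromBlocks_one]
  have hΓiH : (Γ⁻¹)ᴴ = Γ⁻¹ := hΓH.inv.eq
  have hBdetu : IsUnit (lam • (1 : Matrix (Fin n) (Fin n) ℂ) - A)ᴴ.det := by
    rw [Matrix.det_conjTranspose]; exact hlam.star
  have hRH : ((lam • (1 : Matrix (Fin n) (Fin n) ℂ) - A)⁻¹)ᴴ =
      ((lam • (1 : Matrix (Fin n) (Fin n) ℂ) - A)ᴴ)⁻¹ := conjTranspose_nonsing_inv _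
  have hRB : ∀ Z : Matrix (Fin n) (Fin p ⊕ Fin m) ℂ,
      (lam • (1 : Matrix (Fin n) (Fin n) ℂ) - A)⁻¹ *
        ((lam • (1 : Matrix (Fin n) (Fin n) ℂ) - A) * Z) = Z := fun Z => by
    rw [← Matrix.mul_assoc, nonsing_inv_mul _ hlam, Matrix.one_mul]
  have hBR : ∀ Z : Matrix (Fin n) (Fin p ⊕ Fin m) ℂ,
      (lam • (1 : Matrix (Fin n) (Fin n) ℂ) - A) *
        ((lam • (1 : Matrix (Fin n) (Fin n) ℂ) - A)⁻¹ * Z) = Z := fun Z => by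
    rw [← Matrix.mul_assoc, mul_nonsing_inv _ hlam, Matrix.one_mul]
  have hRBh : ∀ Z : Matrix (Fin n) (Fin p ⊕ Fin m) ℂ,
      ((lam • (1 : Matrix (Fin n) (Fin n) ℂ) - A)⁻¹)ᴴ *
        ((lam • (1 : Matrix (Fin n) (Fin n) ℂ) - A)ᴴ * Z) = Z := fun Z => by
    rw [hRH, ← Matrix.mul_assoc, nonsing_inv_mul _ hBdetu, Matrix.one_mul]
  have hBRh : ∀ Z : Matrix (Fin n) (Fin p ⊕ Fin m) ℂ,
      (lam • (1 : Matrix (Fin n) (Fin n) ℂ) - A)ᴴ *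
        (((lam • (1 : Matrix (Fin n) (Fin n) ℂ) - A)⁻¹)ᴴ * Z) = Z := fun Z => by
    rw [hRH, ← Matrix.mul_assoc, mul_nonsing_inv _ hBdetu, Matrix.one_mul]
  have hΓ1 : ∀ Z : Matrix (Fin n) (Fin p ⊕ Fin m) ℂ, Γ⁻¹ * (Γ * Z) = Z := fun Z => by
    rw [← Matrix.mul_assoc, nonsing_inv_mul Γ hΓinv, Matrix.one_mul]
  have hΓ2 : ∀ Z : Matrix (Fin n) (Fin p ⊕ Fin m) ℂ, Γ * (Γ⁻¹ * Z) = Z := fun Z => by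
    rw [← Matrix.mul_assoc, mul_nonsing_inv Γ hΓinv, Matrix.one_mul]
  have h1 : Cᴴ * signatureJ p m * C = -(Γ * A + Aᴴ * Γ) := by rw [hLyap, neg_neg]
  have hKK : ∀ Z : Matrix (Fin n) (Fin p ⊕ Fin m) ℂ,
      Cᴴ * (signatureJ p m * (C * Z)) = -(Γ * (A * Z)) - Aᴴ * (Γ * Z) := fun Z => by
    rw [← Matrix.mul_assoc, ← Matrix.mul_assoc, h1, Matrix.neg_mul, Matrix.add_mul,
      Matrix.mul_assoc, Matrix.mul_assoc]
    abel
  have hΘ : ThetaRealization n p m A C Γ lam =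
      1 - C * (lam • (1 : Matrix (Fin n) (Fin n) ℂ) - A)⁻¹ * Γ⁻¹ * Cᴴ * signatureJ p m := rfl
  have hsm1 : ((lam • (1 : Matrix (Fin n) (Fin n) ℂ) - A) * Γ⁻¹ + A * Γ⁻¹) +
      (Γ⁻¹ * (lam • (1 : Matrix (Fin n) (Fin n) ℂ) - A)ᴴ + Γ⁻¹ * Aᴴ) =
      (lam + star lam) • Γ⁻¹ := by
    simp only [conjTranspose_sub, conjTranspose_smul, conjTranspose_one, Matrix.sub_mul,
      Matrix.mul_sub, smul_mul_assoc, mul_smul_comm, Matrix.one_mul, Matrix.mul_one,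
      add_smul, RCLike.star_def]
    abel
  have hsm2 : (Γ * (lam • (1 : Matrix (Fin n) (Fin n) ℂ) - A) + Γ * A) +
      ((lam • (1 : Matrix (Fin n) (Fin n) ℂ) - A)ᴴ * Γ + Aᴴ * Γ) =
      (lam + star lam) • Γ := by
    simp only [conjTranspose_sub, conjTranspose_smul, conjTranspose_one, Matrix.sub_mul,
      Matrix.mul_sub, smul_mul_assoc, mul_smul_comm, Matrix.one_mul, Matrix.mul_one,
      add_smul, RCLike.star_def]
    abel
  have hc : (0 : ℂ) ≤ lam + star lam := by
    rw [Complex.star_def, Complex.add_conj, Complex.zero_le_real]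
    positivity
  have key1 := my_aux1 (signatureJ p m) C Γ Γ⁻¹ A
    (lam • (1 : Matrix (Fin n) (Fin n) ℂ) - A)
    (lam • (1 : Matrix (Fin n) (Fin n) ℂ) - A)⁻¹
    hJH hJ2 hΓiH hRB hBR hRBh hBRh hΓ1 hΓ2 hKK
  have key2 := my_aux2 (signatureJ p m) C Γ Γ⁻¹ A
    (lam • (1 : Matrix (Fin n) (Fin n) ℂ) - A)
    (lam • (1 : Matrix (Fin n) (Fin n) ℂ) - A)⁻¹
    hJH hJ2 hΓiH hRB hBR hRBh hBRh hΓ1 hΓ2 hKK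
  rw [hsm1] at key1
  rw [hsm2] at key2
  constructor
  · rw [hΘ, key1]
    exact (my_smul_posSemidef hΓpos.posSemidef.inv hc).mul_mul_conjTranspose_same _
  · rw [hΘ, key2]
    exact (my_smul_posSemidef hΓpos.posSemidef hc).mul_mul_conjTranspose_same _
end

section
/- Consequences of J-bicontractivity for the (2,2)-block: Let Θ ∈ ℂ^{(p+m)×(p+m)} have blocks Θ₁₁ ∈ ℂ^{p×p}, Θ₁₂ ∈ ℂ^{p×m}, Θ₂₁ ∈ ℂ^{m×p}, Θ₂₂ ∈ ℂ^{m×m}, and suppose J − Θ J Θᴴ is positive semidefinite, where J := diag(I_p, −I_m). Then: (i) Θ₂₂Θ₂₂ᴴ − Θ₂₁Θ₂₁ᴴ − I_m is positive semidefinite; (ii) Θ₂₂ is invertible; (iii) I_m − (Θ₂₂⁻¹Θ₂₁)(Θ₂₂⁻¹Θ₂₁)ᴴ − Θ₂₂⁻¹(Θ₂₂⁻¹)ᴴ is positive semidefinite (so in particular Θ₂₂⁻¹Θ₂₁ is a strict contraction and Θ₂₂⁻¹ is a contraction). -/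
open Matrix
open scoped Matrix ComplexOrder

/-- **Consequences of `J`-bicontractivity for the (2,2)-block.** If `J − Θ J Θᴴ ⪰ 0` with
`J = diag(I_p, −I_m)`, then (i) `Θ₂₂Θ₂₂ᴴ − Θ₂₁Θ₂₁ᴴ − I ⪰ 0`, (ii) `Θ₂₂` is invertible, and
(iii) `I − (Θ₂₂⁻¹Θ₂₁)(Θ₂₂⁻¹Θ₂₁)ᴴ − Θ₂₂⁻¹(Θ₂₂⁻¹)ᴴ ⪰ 0`. -/
theorem J_bicontraction_block22
    (p m : ℕ) (Θ : Matrix (Fin p ⊕ Fin m) (Fin p ⊕ Fin m) ℂ)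
    (hJc :
      ((Matrix.fromBlocks 1 0 0 (-1) : Matrix (Fin p ⊕ Fin m) (Fin p ⊕ Fin m) ℂ) -
        Θ * (Matrix.fromBlocks 1 0 0 (-1)) * Θᴴ).PosSemidef) :
    (Θ.toBlocks₂₂ * Θ.toBlocks₂₂ᴴ - Θ.toBlocks₂₁ * Θ.toBlocks₂₁ᴴ - 1).PosSemidef ∧
      IsUnit Θ.toBlocks₂₂.det ∧
      (1 - (Θ.toBlocks₂₂⁻¹ * Θ.toBlocks₂₁) * (Θ.toBlocks₂₂⁻¹ * Θ.toBlocks₂₁)ᴴ -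
          Θ.toBlocks₂₂⁻¹ * (Θ.toBlocks₂₂⁻¹)ᴴ).PosSemidef := by
  set A := Θ.toBlocks₂₁
  set B := Θ.toBlocks₂₂
  -- (i)
  have h1 : (B * Bᴴ - A * Aᴴ - 1).PosSemidef := by
    have hsub := hJc.submatrix Sum.inr
    have e : ((fromBlocks 1 0 0 (-1) : Matrix (Fin p ⊕ Fin m) (Fin p ⊕ Fin m) ℂ) -
        Θ * (fromBlocks 1 0 0 (-1)) * Θᴴ).submatrix Sum.inr Sum.inr
        = B * Bᴴ - A * Aᴴ - 1 := by
      have hΘ : Θ = fromBlocks Θ.toBlocks₁₁ Θ.toBlocks₁₂ Θ.toBlocks₂₁ Θ.toBlocks₂₂ :=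
        (fromBlocks_toBlocks Θ).symm
      conv_lhs => rw [hΘ]
      ext i j
      simp [fromBlocks, submatrix_apply, Matrix.sub_apply, Matrix.one_apply, A, B,
        Matrix.neg_apply, Matrix.mul_apply, Finset.sum_add_distrib, conjTranspose_apply]
      ring
    rwa [e] at hsub
  -- B * Bᴴ is positive definite
  have hBBh : (B * Bᴴ).PosDef := by
    have h2 : ((B * Bᴴ - A * Aᴴ - 1) + (A * Aᴴ)).PosSemidef :=
      h1.add (posSemidef_self_mul_conjTranspose A)
    have h3 : (((B * Bᴴ - A * Aᴴ - 1) + (A * Aᴴ)) + 1).PosDef :=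
      Matrix.PosDef.posSemidef_add h2 Matrix.PosDef.one
    have : ((B * Bᴴ - A * Aᴴ - 1) + (A * Aᴴ)) + 1 = B * Bᴴ := by noncomm_ring
    rwa [this] at h3
  have hdet : IsUnit B.det := by
    have := hBBh.det_pos
    rw [det_mul, det_conjTranspose] at this
    exact isUnit_iff_ne_zero.mpr fun h => by simp [h] at this
  refine ⟨h1, hdet, ?_⟩
  -- (iii)
  have hinv : B⁻¹ * B = 1 := nonsing_inv_mul B hdet
  have h4 : (B⁻¹ * (B * Bᴴ - A * Aᴴ - 1) * (B⁻¹)ᴴ).PosSemidef :=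
    h1.mul_mul_conjTranspose_same B⁻¹
  have key : B⁻¹ * (B * Bᴴ - A * Aᴴ - 1) * (B⁻¹)ᴴ
      = 1 - (B⁻¹ * A) * (B⁻¹ * A)ᴴ - B⁻¹ * (B⁻¹)ᴴ := by
    have hinv' : Bᴴ * (B⁻¹)ᴴ = 1 := by
      rw [← conjTranspose_mul, hinv, conjTranspose_one]
    rw [conjTranspose_mul]
    have expand : B⁻¹ * (B * Bᴴ - A * Aᴴ - 1) * (B⁻¹)ᴴ
        = B⁻¹ * B * (Bᴴ * (B⁻¹)ᴴ) - B⁻¹ * A * Aᴴ * (B⁻¹)ᴴ - B⁻¹ * (B⁻¹)ᴴ := by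
      noncomm_ring
      simp only [Matrix.mul_assoc]
      abel
    rw [expand, hinv, hinv', one_mul, Matrix.mul_assoc (B⁻¹ * A)]
  rw [key] at h4
  exact h4
end

section
/- Pointwise invertibility of the denominator of the linear-fractional transform: Let Θ ∈ ℂ^{(p+m)×(p+m)} have blocks Θ₁₁ ∈ ℂ^{p×p}, Θ₁₂ ∈ ℂ^{p×m}, Θ₂₁ ∈ ℂ^{m×p}, Θ₂₂ ∈ ℂ^{m×m} and suppose J − Θ J Θᴴ is positive semidefinite, where J := diag(I_p, −I_m). Then for every G ∈ ℂ^{p×m} with I_m − GᴴG positive semidefinite, the matrix Θ₂₁ G + Θ₂₂ is invertible. -/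
open Matrix
open scoped Matrix ComplexOrder

noncomputable def env {n : ℕ} (v : Fin n → ℂ) : EuclideanSpace ℂ (Fin n) :=
  (WithLp.equiv 2 (Fin n → ℂ)).symm v

lemma dot_eq_normSq {n : ℕ} (v : Fin n → ℂ) :
    star v ⬝ᵥ v = (‖env v‖ : ℂ) ^ 2 := by
  rw [dotProduct_comm, ← EuclideanSpace.inner_toLp_toLp, inner_self_eq_norm_sq_to_K]
  rfl

lemma contraction_norm_le {p m : ℕ} (G : Matrix (Fin p) (Fin m) ℂ)
    (hG : (1 - Gᴴ * G).PosSemidef) (y : Fin m → ℂ) :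
    ‖env (G *ᵥ y)‖ ≤ ‖env y‖ := by
  have h := hG.dotProduct_mulVec_nonneg y
  rw [sub_mulVec, one_mulVec, dotProduct_sub, ← mulVec_mulVec] at h
  have e : star y ⬝ᵥ (Gᴴ *ᵥ (G *ᵥ y)) = star (G *ᵥ y) ⬝ᵥ (G *ᵥ y) := by
    rw [star_mulVec, dotProduct_mulVec]
  rw [e, dot_eq_normSq, dot_eq_normSq] at h
  have h' : (0:ℝ) ≤ ‖env y‖ ^ 2 - ‖env (G *ᵥ y)‖ ^ 2 := by
    have h2 : (0:ℂ) ≤ ((‖env y‖ ^ 2 - ‖env (G *ᵥ y)‖ ^ 2 : ℝ) : ℂ) := by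
      push_cast; exact h
    exact Complex.zero_le_real.mp h2
  nlinarith [norm_nonneg (env (G *ᵥ y)), norm_nonneg (env y)]


/-- **Pointwise invertibility of the denominator of the linear-fractional transform.**
If `J − Θ J Θᴴ ⪰ 0` with `J = diag(I_p, −I_m)`, then for every contraction `G`
(`I − GᴴG ⪰ 0`) the matrix `Θ₂₁ G + Θ₂₂` is invertible. -/
theorem lft_denominator_invertible
    (p m : ℕ) (Θ : Matrix (Fin p ⊕ Fin m) (Fin p ⊕ Fin m) ℂ)
    (hJc :
      ((Matrix.fromBlocks 1 0 0 (-1) : Matrix (Fin p ⊕ Fin m) (Fin p ⊕ Fin m) ℂ) -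
        Θ * (Matrix.fromBlocks 1 0 0 (-1)) * Θᴴ).PosSemidef) :
    ∀ G : Matrix (Fin p) (Fin m) ℂ, (1 - Gᴴ * G).PosSemidef →
      IsUnit (Θ.toBlocks₂₁ * G + Θ.toBlocks₂₂).det := by
  intro G hG
  set C := Θ.toBlocks₂₁ with hC
  set Dm := Θ.toBlocks₂₂ with hD
  -- the (2,2) block of J - ΘJΘᴴ is Dm*Dmᴴ - C*Cᴴ - 1, and it is PSD
  have h22 : (Dm * Dmᴴ - C * Cᴴ - 1).PosSemidef := by
    have hs := hJc.submatrix Sum.inr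
    have : ((Matrix.fromBlocks 1 0 0 (-1) : Matrix (Fin p ⊕ Fin m) (Fin p ⊕ Fin m) ℂ) -
        Θ * (Matrix.fromBlocks 1 0 0 (-1)) * Θᴴ).submatrix Sum.inr Sum.inr
        = Dm * Dmᴴ - C * Cᴴ - 1 := by
      ext i j
      simp [Matrix.sub_apply, Matrix.submatrix_apply, Matrix.mul_apply, Fintype.sum_sum_type,
        Matrix.one_apply, Matrix.fromBlocks, Matrix.conjTranspose_apply, toBlocks₂₁, toBlocks₂₂,
        Finset.sum_sub_distrib, sub_eq_add_neg, add_comm, add_left_comm, add_assoc]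
      simp [hC, hD, toBlocks₂₁, toBlocks₂₂]
    rwa [this] at hs
  -- injectivity of (C*G + Dm)ᴴ
  have hinj : ∀ x : Fin m → ℂ, (C * G + Dm)ᴴ *ᵥ x = 0 → x = 0 := by
    intro x hx
    set u := Cᴴ *ᵥ x with hu
    set y := Gᴴ *ᵥ u with hy
    have hw : Dmᴴ *ᵥ x = -y := by
      have : Gᴴ *ᵥ (Cᴴ *ᵥ x) + Dmᴴ *ᵥ x = 0 := by
        simpa [Matrix.conjTranspose_add, Matrix.conjTranspose_mul, Matrix.add_mulVec,
          Matrix.mulVec_mulVec] using hx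
      rw [← hy] at this
      linear_combination (norm := module) this
    -- quadratic form inequality
    have hq := h22.dotProduct_mulVec_nonneg x
    rw [sub_mulVec, sub_mulVec, one_mulVec, dotProduct_sub, dotProduct_sub,
      ← mulVec_mulVec, ← mulVec_mulVec] at hq
    have e1 : star x ⬝ᵥ (Dm *ᵥ (Dmᴴ *ᵥ x)) = star (Dmᴴ *ᵥ x) ⬝ᵥ (Dmᴴ *ᵥ x) := by
      rw [star_mulVec, dotProduct_mulVec, conjTranspose_conjTranspose]
    have e2 : star x ⬝ᵥ (C *ᵥ (Cᴴ *ᵥ x)) = star u ⬝ᵥ u := by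
      rw [hu, star_mulVec, dotProduct_mulVec, conjTranspose_conjTranspose]
    rw [e1, e2, hw] at hq
    have hw2 : star (-y) ⬝ᵥ (-y) = star y ⬝ᵥ y := by simp
    rw [hw2, dot_eq_normSq, dot_eq_normSq, dot_eq_normSq] at hq
    set a := ‖env y‖
    set b := ‖env u‖
    set c := ‖env x‖
    have hq' : (0:ℝ) ≤ a ^ 2 - b ^ 2 - c ^ 2 := by
      have : (0:ℂ) ≤ ((a ^ 2 - b ^ 2 - c ^ 2 : ℝ) : ℂ) := by push_cast; exact_mod_cast hq
      exact Complex.zero_le_real.mp this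
    -- Cauchy-Schwarz: a² ≤ b * a
    have hcs : a ^ 2 ≤ b * a := by
      have hsy : star y = star u ᵥ* G := by
        rw [hy, star_mulVec, conjTranspose_conjTranspose]
      have key : star y ⬝ᵥ y = star u ⬝ᵥ (G *ᵥ y) := by
        rw [hsy, ← dotProduct_mulVec]
      have key2 : star u ⬝ᵥ (G *ᵥ y) = inner ℂ (env u) (env (G *ᵥ y)) := by
        rw [dotProduct_comm]; rfl
      have h1 : ‖star y ⬝ᵥ y‖ ≤ b * ‖env (G *ᵥ y)‖ := by
        rw [key, key2]; exact norm_inner_le_norm _ _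
      have h2 : ‖env (G *ᵥ y)‖ ≤ a := contraction_norm_le G hG y
      have h3 : ‖star y ⬝ᵥ y‖ = a ^ 2 := by
        rw [dot_eq_normSq]
        simp
        rfl
      calc a ^ 2 = ‖star y ⬝ᵥ y‖ := h3.symm
        _ ≤ b * ‖env (G *ᵥ y)‖ := h1
        _ ≤ b * a := by
            exact mul_le_mul_of_nonneg_left h2 (norm_nonneg _)
    have ha : (0:ℝ) ≤ a := norm_nonneg _
    have hb : (0:ℝ) ≤ b := norm_nonneg _
    have hab : a ≤ b := by
      rcases eq_or_lt_of_le ha with h0 | h0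
      · rw [← h0]; exact hb
      · exact (mul_le_mul_iff_left₀ h0).mp (by nlinarith)
    have hc2 : c ^ 2 ≤ 0 := by nlinarith [pow_le_pow_left₀ ha hab 2]
    have hc0 : c = 0 := sq_eq_zero_iff.mp (le_antisymm hc2 (sq_nonneg c))
    have : env x = 0 := norm_eq_zero.mp hc0
    simpa [env] using congrArg (WithLp.equiv 2 (Fin m → ℂ)) this
  -- conclude invertibility
  rw [isUnit_iff_ne_zero]
  intro hdet
  have hdetH : ((C * G + Dm)ᴴ).det = 0 := by
    rw [det_conjTranspose, hdet, star_zero]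
  obtain ⟨v, hv0, hv⟩ := (Matrix.exists_mulVec_eq_zero_iff).mpr hdetH
  exact hv0 (hinj v hv)
end

section
/- Negative-squares bound for the kernel K_{Θ,J}: For any finite family of points z_1,…,z_M ∈ ℂ with Re z_k > 0 and z_kI_n − A invertible for each k, the M(p+m) × M(p+m) block matrix G with (k,l) block G_{kl} := (J − Θ(z_k) J Θ(z_l)ᴴ)/(z_k + conj(z_l)) is Hermitian and has at most ν₋(Γ) negative eigenvalues (counted with multiplicity). -/
open Matrix
open scoped Matrix

/-- The number of negative eigenvalues (with multiplicity) of a Hermitian matrix. -/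
noncomputable def negEigCount {ι : Type*} [Fintype ι] [DecidableEq ι]
    (H : Matrix ι ι ℂ) (hH : H.IsHermitian) : ℕ :=
  Fintype.card {i // hH.eigenvalues i < 0}

namespace NegSquaresAux

open Module Submodule

section Abstract
variable {ι κ : Type*} [Fintype ι] [DecidableEq ι] [Fintype κ] [DecidableEq κ]

theorem quad_eq_sum (H : Matrix ι ι ℂ) (hH : H.IsHermitian) (x : ι → ℂ) :
    star x ⬝ᵥ (H *ᵥ x)
      = ∑ i, ((RCLike.ofReal (hH.eigenvalues i) : ℂ) *
          (star ((star (hH.eigenvectorUnitary : Matrix ι ι ℂ) *ᵥ x) i)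
            * (star (hH.eigenvectorUnitary : Matrix ι ι ℂ) *ᵥ x) i)) := by
  set U : Matrix ι ι ℂ := (hH.eigenvectorUnitary : Matrix ι ι ℂ) with hU
  set y := star U *ᵥ x with hy
  conv_lhs => rw [hH.spectral_theorem, Unitary.conjStarAlgAut_apply, ← hU]
  rw [← Matrix.mulVec_mulVec, ← Matrix.mulVec_mulVec, Matrix.dotProduct_mulVec]
  have h1 : star x ᵥ* (U : Matrix ι ι ℂ) = star y := by
    rw [hy, Matrix.star_mulVec]
    simp [Matrix.star_eq_conjTranspose]
  rw [h1]
  simp only [dotProduct, Matrix.mulVec_diagonal, Pi.star_apply, Function.comp_apply]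
  exact Finset.sum_congr rfl fun i _ => by ring

theorem quad_re_eq_sum (H : Matrix ι ι ℂ) (hH : H.IsHermitian) (x : ι → ℂ) :
    (star x ⬝ᵥ (H *ᵥ x)).re
      = ∑ i, (hH.eigenvalues i *
          Complex.normSq ((star (hH.eigenvectorUnitary : Matrix ι ι ℂ) *ᵥ x) i)) := by
  rw [quad_eq_sum H hH x, Complex.re_sum]
  refine Finset.sum_congr rfl fun i _ => ?_
  have h2 : star ((star (hH.eigenvectorUnitary : Matrix ι ι ℂ) *ᵥ x) i)
      * (star (hH.eigenvectorUnitary : Matrix ι ι ℂ) *ᵥ x) i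
      = (Complex.normSq ((star (hH.eigenvectorUnitary : Matrix ι ι ℂ) *ᵥ x) i) : ℂ) := by
    rw [Complex.normSq_eq_conj_mul_self]; rfl
  have hco : (RCLike.ofReal : ℝ → ℂ) = Complex.ofReal := rfl
  rw [h2, hco, ← Complex.ofReal_mul, Complex.ofReal_re]

theorem coord_vanish (H : Matrix ι ι ℂ) (hH : H.IsHermitian) (p : ι → Prop) (x : ι → ℂ)
    (hx : x ∈ span ℂ (Set.range fun j : {j // p j} => ⇑(hH.eigenvectorBasis j)))
    (i : ι) (hi : ¬ p i) :
    (star (hH.eigenvectorUnitary : Matrix ι ι ℂ) *ᵥ x) i = 0 := by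
  set φ : (ι → ℂ) →ₗ[ℂ] ℂ :=
    (LinearMap.proj i) ∘ₗ (Matrix.mulVecLin (star (hH.eigenvectorUnitary : Matrix ι ι ℂ)))
  have hle : span ℂ (Set.range fun j : {j // p j} => ⇑(hH.eigenvectorBasis j))
      ≤ LinearMap.ker φ := by
    rw [Submodule.span_le]
    rintro _ ⟨j, rfl⟩
    have h1 : φ ⇑(hH.eigenvectorBasis j) = (Pi.single (j : ι) 1 : ι → ℂ) i := by
      simp only [φ, LinearMap.comp_apply, Matrix.mulVecLin_apply, LinearMap.proj_apply]
      rw [hH.star_eigenvectorUnitary_mulVec]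
    have h2 : (Pi.single (j : ι) 1 : ι → ℂ) i = 0 := by
      apply Pi.single_eq_of_ne
      rintro rfl; exact hi j.2
    exact LinearMap.mem_ker.2 (h1.trans h2)
  exact hle hx

theorem vec_ne_zero (H : Matrix ι ι ℂ) (hH : H.IsHermitian) (x : ι → ℂ) (hx : x ≠ 0) :
    star (hH.eigenvectorUnitary : Matrix ι ι ℂ) *ᵥ x ≠ 0 := by
  intro h0
  apply hx
  have := congrArg (fun v => (hH.eigenvectorUnitary : Matrix ι ι ℂ) *ᵥ v) h0
  simpa [Matrix.mulVec_mulVec, Unitary.coe_mul_star_self] using this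

noncomputable def spanNeg (H : Matrix ι ι ℂ) (hH : H.IsHermitian) : Submodule ℂ (ι → ℂ) :=
  span ℂ (Set.range fun j : {j // hH.eigenvalues j < 0} => ⇑(hH.eigenvectorBasis j))

noncomputable def spanNonneg (H : Matrix ι ι ℂ) (hH : H.IsHermitian) : Submodule ℂ (ι → ℂ) :=
  span ℂ (Set.range fun j : {j // ¬ hH.eigenvalues j < 0} => ⇑(hH.eigenvectorBasis j))

theorem linIndep_eigenvectors (H : Matrix ι ι ℂ) (hH : H.IsHermitian) :
    LinearIndependent ℂ (fun j : ι => ⇑(hH.eigenvectorBasis j) : ι → ι → ℂ) :=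
  hH.eigenvectorBasis.orthonormal.linearIndependent.map' (WithLp.linearEquiv 2 ℂ (ι → ℂ)).toLinearMap
    (WithLp.linearEquiv 2 ℂ (ι → ℂ)).ker

theorem finrank_spanNeg (H : Matrix ι ι ℂ) (hH : H.IsHermitian) :
    finrank ℂ (spanNeg H hH) = negEigCount H hH :=
  finrank_span_eq_card ((linIndep_eigenvectors H hH).comp _ Subtype.val_injective)

theorem finrank_spanNonneg (H : Matrix ι ι ℂ) (hH : H.IsHermitian) :
    finrank ℂ (spanNonneg H hH) = Fintype.card ι - negEigCount H hH := by
  have h : finrank ℂ (spanNonneg H hH) = Fintype.card {j // ¬ hH.eigenvalues j < 0} :=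
    finrank_span_eq_card ((linIndep_eigenvectors H hH).comp _ Subtype.val_injective)
  rw [h, Fintype.card_subtype_compl, negEigCount]

theorem quad_re_neg (H : Matrix ι ι ℂ) (hH : H.IsHermitian) (x : ι → ℂ)
    (hx : x ∈ spanNeg H hH) (hx0 : x ≠ 0) :
    (star x ⬝ᵥ (H *ᵥ x)).re < 0 := by
  rw [quad_re_eq_sum H hH x]
  set y := star (hH.eigenvectorUnitary : Matrix ι ι ℂ) *ᵥ x with hy
  have hvan : ∀ i, ¬ hH.eigenvalues i < 0 → y i = 0 := fun i hi =>
    coord_vanish H hH _ x hx i hi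
  obtain ⟨i0, hi0⟩ := Function.ne_iff.1 (vec_ne_zero H hH x hx0)
  simp only [Pi.zero_apply] at hi0
  have hneg : hH.eigenvalues i0 < 0 := by
    by_contra h; exact hi0 (hvan i0 h)
  have := Finset.sum_lt_sum (s := (Finset.univ : Finset ι))
    (f := fun i => hH.eigenvalues i * Complex.normSq (y i)) (g := fun _ => (0:ℝ))
    (fun i _ => by
      show hH.eigenvalues i * Complex.normSq (y i) ≤ 0
      by_cases h : hH.eigenvalues i < 0
      · exact mul_nonpos_iff.2 (Or.inr ⟨h.le, Complex.normSq_nonneg _⟩)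
      · rw [hvan i h]; simp)
    ⟨i0, Finset.mem_univ _, mul_neg_of_neg_of_pos hneg (Complex.normSq_pos.2 hi0)⟩
  simpa using this

theorem quad_re_nonneg (H : Matrix ι ι ℂ) (hH : H.IsHermitian) (x : ι → ℂ)
    (hx : x ∈ spanNonneg H hH) :
    0 ≤ (star x ⬝ᵥ (H *ᵥ x)).re := by
  rw [quad_re_eq_sum H hH x]
  set y := star (hH.eigenvectorUnitary : Matrix ι ι ℂ) *ᵥ x with hy
  have hvan : ∀ i, hH.eigenvalues i < 0 → y i = 0 := fun i hi =>
    coord_vanish H hH _ x hx i (not_not.2 hi)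
  refine Finset.sum_nonneg fun i _ => ?_
  by_cases h : hH.eigenvalues i < 0
  · rw [hvan i h]; simp
  · exact mul_nonneg (not_lt.1 h) (Complex.normSq_nonneg _)

theorem negdef_finrank_le (H : Matrix ι ι ℂ) (hH : H.IsHermitian)
    (W : Submodule ℂ (ι → ℂ))
    (hW : ∀ x ∈ W, x ≠ 0 → (star x ⬝ᵥ (H *ᵥ x)).re < 0) :
    finrank ℂ W ≤ negEigCount H hH := by
  have hdisj : Disjoint W (spanNonneg H hH) := by
    rw [Submodule.disjoint_def]
    intro x hxW hxP
    by_contra hx0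
    exact absurd (quad_re_nonneg H hH x hxP) (not_le.2 (hW x hxW hx0))
  have hle := Submodule.finrank_add_finrank_le_of_disjoint hdisj
  rw [finrank_spanNonneg] at hle
  have hfr : finrank ℂ (ι → ℂ) = Fintype.card ι := Module.finrank_pi ℂ
  rw [hfr] at hle
  have hcard : negEigCount H hH ≤ Fintype.card ι := Fintype.card_subtype_le _
  omega

theorem inertia_mul_le (H : Matrix ι ι ℂ) (hH : H.IsHermitian) (B : Matrix κ ι ℂ)
    (hG : (B * H * Bᴴ).IsHermitian) :
    negEigCount (B * H * Bᴴ) hG ≤ negEigCount H hH := by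
  have hform : ∀ x : κ → ℂ,
      star x ⬝ᵥ ((B * H * Bᴴ) *ᵥ x) = star (Bᴴ *ᵥ x) ⬝ᵥ (H *ᵥ (Bᴴ *ᵥ x)) := by
    intro x
    rw [← Matrix.mulVec_mulVec, ← Matrix.mulVec_mulVec, Matrix.dotProduct_mulVec]
    congr 1
    rw [Matrix.star_mulVec, Matrix.conjTranspose_conjTranspose]
  set L : (κ → ℂ) →ₗ[ℂ] (ι → ℂ) := Matrix.mulVecLin Bᴴ with hL
  have hLx : ∀ x, L x = Bᴴ *ᵥ x := fun _ => rfl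
  set W := (spanNeg _ hG).map L with hW
  have hWneg : ∀ y ∈ W, y ≠ 0 → (star y ⬝ᵥ (H *ᵥ y)).re < 0 := by
    rintro y hy hy0
    obtain ⟨x, hx, rfl⟩ := Submodule.mem_map.1 hy
    have hx0 : x ≠ 0 := by rintro rfl; exact hy0 (map_zero L)
    have h := quad_re_neg _ hG x hx hx0
    rw [hform] at h
    rw [hLx]
    exact h
  have key := negdef_finrank_le H hH W hWneg
  have hinj : Function.Injective (L.domRestrict (spanNeg _ hG)) := by
    rw [← LinearMap.ker_eq_bot, LinearMap.ker_eq_bot']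
    intro x hx0
    by_contra h
    have hx1 : (x : κ → ℂ) ≠ 0 := fun he => h (Subtype.ext he)
    have hq := quad_re_neg _ hG (x : κ → ℂ) x.2 hx1
    rw [hform] at hq
    have hLx0 : Bᴴ *ᵥ (x : κ → ℂ) = 0 := hx0
    rw [hLx0] at hq
    simp at hq
  have hfr : finrank ℂ (spanNeg _ hG) = finrank ℂ W := by
    have h := LinearMap.finrank_range_of_inj hinj
    rw [LinearMap.range_domRestrict] at h
    rw [hW]
    exact h.symm
  rw [← finrank_spanNeg _ hG, hfr]
  exact key

end Abstract

theorem signatureJ_mul_self (p m : ℕ) : signatureJ p m * signatureJ p m = 1 := by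
  simp [signatureJ, Matrix.fromBlocks_multiply, ← Matrix.fromBlocks_one]

theorem signatureJ_conjTranspose (p m : ℕ) : (signatureJ p m)ᴴ = signatureJ p m := by
  simp [signatureJ, Matrix.fromBlocks_conjTranspose]

theorem theta_kernel_identity (n p m : ℕ) (A : Matrix (Fin n) (Fin n) ℂ)
    (C : Matrix (Fin p ⊕ Fin m) (Fin n) ℂ) (Γ : Matrix (Fin n) (Fin n) ℂ)
    (hΓH : Γ.IsHermitian) (hΓinv : IsUnit Γ.det)
    (hLyap : Γ * A + Aᴴ * Γ = -(Cᴴ * signatureJ p m * C))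
    (zz ww : ℂ) (hz : IsUnit ((zz • 1 : Matrix (Fin n) (Fin n) ℂ) - A).det)
    (hw : IsUnit ((ww • 1 : Matrix (Fin n) (Fin n) ℂ) - A).det) :
    signatureJ p m - ThetaRealization n p m A C Γ zz * signatureJ p m *
        (ThetaRealization n p m A C Γ ww)ᴴ
      = (zz + star ww) • (C * ((zz • 1 : Matrix (Fin n) (Fin n) ℂ) - A)⁻¹ * Γ⁻¹ *
          (((ww • 1 : Matrix (Fin n) (Fin n) ℂ) - A)⁻¹)ᴴ * Cᴴ) := by
  set J := signatureJ p m with hJ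
  set Rz : Matrix (Fin n) (Fin n) ℂ := ((zz • 1 : Matrix (Fin n) (Fin n) ℂ) - A)⁻¹ with hRz
  set Tw : Matrix (Fin n) (Fin n) ℂ := (((ww • 1 : Matrix (Fin n) (Fin n) ℂ) - A)⁻¹)ᴴ with hTwdef
  set Sw : Matrix (Fin n) (Fin n) ℂ := (star ww) • (1 : Matrix (Fin n) (Fin n) ℂ) - Aᴴ with hSw
  have hJJ : J * J = 1 := by rw [hJ]; exact signatureJ_mul_self p m
  have hSweq : ((ww • 1 : Matrix (Fin n) (Fin n) ℂ) - A)ᴴ = Sw := by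
    rw [hSw, Matrix.conjTranspose_sub, Matrix.conjTranspose_smul, Matrix.conjTranspose_one]
  have hSwdet : IsUnit Sw.det := by
    rw [← hSweq, Matrix.det_conjTranspose]; exact hw.star
  have hTw : Tw = Sw⁻¹ := by rw [hTwdef, Matrix.conjTranspose_nonsing_inv, hSweq]
  have hRz1 : Rz * ((zz • 1 : Matrix (Fin n) (Fin n) ℂ) - A) = 1 := by
    rw [hRz]; exact Matrix.nonsing_inv_mul _ hz
  have hSwTw : Sw * Tw = 1 := by rw [hTw]; exact Matrix.mul_nonsing_inv _ hSwdet
  have hΓ1 : Γ⁻¹ * Γ = 1 := Matrix.nonsing_inv_mul _ hΓinv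
  have hΓ2 : Γ * Γ⁻¹ = 1 := Matrix.mul_nonsing_inv _ hΓinv
  have hCJC : Cᴴ * J * C = -(Γ * A + Aᴴ * Γ) := by rw [hJ, hLyap, neg_neg]
  set X : Matrix (Fin p ⊕ Fin m) (Fin p ⊕ Fin m) ℂ := C * Rz * Γ⁻¹ * Cᴴ with hX
  set Y : Matrix (Fin p ⊕ Fin m) (Fin p ⊕ Fin m) ℂ := C * Γ⁻¹ * Tw * Cᴴ with hY
  have hΘw : (ThetaRealization n p m A C Γ ww)ᴴ = 1 - J * (C * Γ⁻¹ * Tw * Cᴴ) := by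
    rw [ThetaRealization, Matrix.conjTranspose_sub, Matrix.conjTranspose_one]
    congr 1
    rw [Matrix.conjTranspose_mul, Matrix.conjTranspose_mul, Matrix.conjTranspose_mul,
      Matrix.conjTranspose_mul, Matrix.conjTranspose_conjTranspose,
      signatureJ_conjTranspose, hΓH.inv.eq, ← hTwdef, ← hJ]
    simp only [Matrix.mul_assoc]
  have hΘz : ThetaRealization n p m A C Γ zz = 1 - X * J := by
    rw [ThetaRealization, ← hRz, ← hJ, hX]
  have e1 : (1 - X * J) * J = J - X := by
    rw [sub_mul, one_mul, Matrix.mul_assoc, hJJ, Matrix.mul_one]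
  have e2 : (J - X) * (1 - J * Y) = J - Y - X + X * (J * Y) := by
    rw [sub_mul, Matrix.mul_sub, Matrix.mul_sub, Matrix.mul_one, Matrix.mul_one,
      ← Matrix.mul_assoc J J Y, hJJ, Matrix.one_mul]
    abel
  have expand : J - ThetaRealization n p m A C Γ zz * J * (ThetaRealization n p m A C Γ ww)ᴴ
      = X + Y - X * (J * Y) := by
    rw [hΘz, hΘw, ← hY, e1, e2]
    abel
  have hCJCZ : ∀ Z : Matrix (Fin n) (Fin p ⊕ Fin m) ℂ,
      Cᴴ * (J * (C * Z)) = -((Γ * A + Aᴴ * Γ) * Z) := by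
    intro Z
    rw [← Matrix.mul_assoc, ← Matrix.mul_assoc, hCJC, Matrix.neg_mul]
  have hGamma_sand : ∀ W : Matrix (Fin n) (Fin p ⊕ Fin m) ℂ,
      Γ⁻¹ * ((Γ * A + Aᴴ * Γ) * (Γ⁻¹ * W)) = A * (Γ⁻¹ * W) + Γ⁻¹ * (Aᴴ * W) := by
    intro W
    simp only [Matrix.add_mul, add_mul, Matrix.mul_add, ← Matrix.mul_assoc]
    rw [hΓ1, Matrix.one_mul, Matrix.mul_assoc (Γ⁻¹ * Aᴴ) Γ Γ⁻¹, hΓ2, Matrix.mul_one]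
  have hXJY : X * (J * Y)
      = -(C * (Rz * (A * (Γ⁻¹ * (Tw * Cᴴ)) + Γ⁻¹ * (Aᴴ * (Tw * Cᴴ))))) := by
    rw [hX, hY]
    simp only [Matrix.mul_assoc]
    rw [hCJCZ, Matrix.mul_neg, Matrix.mul_neg, Matrix.mul_neg, hGamma_sand]
  have c1 : zz • (C * (Rz * (Γ⁻¹ * (Tw * Cᴴ))))
      = C * (Γ⁻¹ * (Tw * Cᴴ)) + C * (Rz * (A * (Γ⁻¹ * (Tw * Cᴴ)))) := by
    have h1 : zz • (C * (Rz * (Γ⁻¹ * (Tw * Cᴴ))))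
        = C * (Rz * ((zz • (1 : Matrix (Fin n) (Fin n) ℂ)) * (Γ⁻¹ * (Tw * Cᴴ)))) := by
      rw [Matrix.smul_mul, Matrix.one_mul, Matrix.mul_smul, Matrix.mul_smul]
    have h2 : (zz • (1 : Matrix (Fin n) (Fin n) ℂ))
        = ((zz • 1 : Matrix (Fin n) (Fin n) ℂ) - A) + A := by abel
    rw [h1, h2, Matrix.add_mul, Matrix.mul_add, Matrix.mul_add,
      ← Matrix.mul_assoc Rz ((zz • 1 : Matrix (Fin n) (Fin n) ℂ) - A) (Γ⁻¹ * (Tw * Cᴴ)),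
      hRz1, Matrix.one_mul]
  have c2 : (star ww) • (C * (Rz * (Γ⁻¹ * (Tw * Cᴴ))))
      = C * (Rz * (Γ⁻¹ * Cᴴ)) + C * (Rz * (Γ⁻¹ * (Aᴴ * (Tw * Cᴴ)))) := by
    have h1 : (star ww) • (C * (Rz * (Γ⁻¹ * (Tw * Cᴴ))))
        = C * (Rz * (Γ⁻¹ * (((star ww) • (1 : Matrix (Fin n) (Fin n) ℂ)) * (Tw * Cᴴ)))) := by
      rw [Matrix.smul_mul, Matrix.one_mul, Matrix.mul_smul, Matrix.mul_smul, Matrix.mul_smul]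
    have h2 : ((star ww) • (1 : Matrix (Fin n) (Fin n) ℂ)) = Sw + Aᴴ := by rw [hSw]; abel
    rw [h1, h2, Matrix.add_mul, Matrix.mul_add, Matrix.mul_add, Matrix.mul_add,
      ← Matrix.mul_assoc Sw Tw Cᴴ, hSwTw, Matrix.one_mul]
  rw [expand, hXJY, sub_neg_eq_add, hX, hY]
  simp only [Matrix.mul_assoc, Matrix.mul_add]
  rw [add_smul, c1, c2]
  abel

end NegSquaresAux

open NegSquaresAux in
/-- **Negative-squares bound for the kernel `K_{Θ,J}`.** For points `z₁,…,z_M` in the open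
right half-plane at which `z_k I − A` is invertible, the block matrix with `(k,l)` block
`(J − Θ(z_k) J Θ(z_l)ᴴ)/(z_k + conj z_l)` is Hermitian and has at most `ν₋(Γ)` negative
eigenvalues. -/
theorem negative_squares_bound_K_Theta_J
    (n p m : ℕ) (A : Matrix (Fin n) (Fin n) ℂ)
    (C : Matrix (Fin p ⊕ Fin m) (Fin n) ℂ) (Γ : Matrix (Fin n) (Fin n) ℂ)
    (hΓH : Γ.IsHermitian) (hΓinv : IsUnit Γ.det)
    (hLyap : Γ * A + Aᴴ * Γ = -(Cᴴ * signatureJ p m * C))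
    (M : ℕ) (z : Fin M → ℂ) (hzre : ∀ k, 0 < (z k).re)
    (hzA : ∀ k, IsUnit ((z k) • (1 : Matrix (Fin n) (Fin n) ℂ) - A).det) :
    let G : Matrix (Fin M × (Fin p ⊕ Fin m)) (Fin M × (Fin p ⊕ Fin m)) ℂ :=
      Matrix.of fun ki lj =>
        ((z ki.1 + star (z lj.1))⁻¹ •
          (signatureJ p m -
            ThetaRealization n p m A C Γ (z ki.1) * signatureJ p m *
              (ThetaRealization n p m A C Γ (z lj.1))ᴴ)) ki.2 lj.2
    ∃ hG : G.IsHermitian, negEigCount G hG ≤ negEigCount Γ hΓH := by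
  intro G
  have hΓ2 : Γ * Γ⁻¹ = 1 := Matrix.mul_nonsing_inv _ hΓinv
  set B : Matrix (Fin M × (Fin p ⊕ Fin m)) (Fin n) ℂ :=
    Matrix.of (fun ki a => (C * ((z ki.1) • (1 : Matrix (Fin n) (Fin n) ℂ) - A)⁻¹ * Γ⁻¹) ki.2 a)
    with hB
  have hne : ∀ k l : Fin M, (z k + star (z l)) ≠ 0 := by
    intro k l h
    have : 0 < (z k + star (z l)).re := by
      rw [Complex.add_re]
      have : (star (z l)).re = (z l).re := rfl
      rw [this]
      exact add_pos (hzre k) (hzre l)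
    rw [h] at this
    simp at this
  have hmat : ∀ k l : Fin M,
      (C * ((z k) • (1 : Matrix (Fin n) (Fin n) ℂ) - A)⁻¹ * Γ⁻¹) * Γ *
        (C * ((z l) • (1 : Matrix (Fin n) (Fin n) ℂ) - A)⁻¹ * Γ⁻¹)ᴴ
      = C * ((z k) • (1 : Matrix (Fin n) (Fin n) ℂ) - A)⁻¹ * Γ⁻¹ *
          (((z l) • (1 : Matrix (Fin n) (Fin n) ℂ) - A)⁻¹)ᴴ * Cᴴ := by
    intro k l
    rw [Matrix.conjTranspose_mul, Matrix.conjTranspose_mul, hΓH.inv.eq]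
    simp only [Matrix.mul_assoc]
    congr 2
    rw [← Matrix.mul_assoc Γ Γ⁻¹, hΓ2, Matrix.one_mul]
  have hgeq : G = B * Γ * Bᴴ := by
    ext ki lj
    show ((z ki.1 + star (z lj.1))⁻¹ •
          (signatureJ p m -
            ThetaRealization n p m A C Γ (z ki.1) * signatureJ p m *
              (ThetaRealization n p m A C Γ (z lj.1))ᴴ)) ki.2 lj.2 = (B * Γ * Bᴴ) ki lj
    rw [theta_kernel_identity n p m A C Γ hΓH hΓinv hLyap (z ki.1) (z lj.1)
        (hzA ki.1) (hzA lj.1), inv_smul_smul₀ (hne ki.1 lj.1), ← hmat ki.1 lj.1]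
    simp only [Matrix.mul_apply, Matrix.conjTranspose_apply, hB, Matrix.of_apply]
  have hBherm : (B * Γ * Bᴴ).IsHermitian :=
    Matrix.isHermitian_mul_mul_conjTranspose B hΓH
  have hG : G.IsHermitian := by rw [hgeq]; exact hBherm
  refine ⟨hG, ?_⟩
  have main : ∀ (G' : Matrix (Fin M × (Fin p ⊕ Fin m)) (Fin M × (Fin p ⊕ Fin m)) ℂ)
      (hG' : G'.IsHermitian), G' = B * Γ * Bᴴ → negEigCount G' hG' ≤ negEigCount Γ hΓH := by
    rintro G' hG' rfl
    exact inertia_mul_le Γ hΓH B hG'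
  exact main G hG hgeq
end

section
/- Determinant formula for Θ: Let A ∈ ℂ^{n×n}, C ∈ ℂ^{(p+m)×n}, J := diag(I_p, −I_m), and let Γ ∈ ℂ^{n×n} be invertible with ΓA + AᴴΓ = −CᴴJC. Then for every λ ∈ ℂ such that λI_n − A is invertible, det(I_{p+m} − C(λI_n − A)⁻¹Γ⁻¹CᴴJ) = det(λI_n + Aᴴ)/det(λI_n − A). -/
open Matrix
open scoped Matrix

/-- **Determinant formula for `Θ`.** If `Γ` is invertible and `ΓA + AᴴΓ = −CᴴJC` with
`J = diag(I_p, −I_m)`, then for every `λ` at which `λI − A` is invertible,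
`det(I − C(λI − A)⁻¹Γ⁻¹CᴴJ) = det(λI + Aᴴ)/det(λI − A)`. -/
theorem theta_determinant_formula
    (n p m : ℕ) (A : Matrix (Fin n) (Fin n) ℂ)
    (C : Matrix (Fin p ⊕ Fin m) (Fin n) ℂ) (Γ : Matrix (Fin n) (Fin n) ℂ)
    (hΓinv : IsUnit Γ.det)
    (hLyap : Γ * A + Aᴴ * Γ =
      -(Cᴴ * (Matrix.fromBlocks 1 0 0 (-1) : Matrix (Fin p ⊕ Fin m) (Fin p ⊕ Fin m) ℂ) * C))
    (lam : ℂ)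
    (hlam : IsUnit (lam • (1 : Matrix (Fin n) (Fin n) ℂ) - A).det) :
    (1 - C * (lam • (1 : Matrix (Fin n) (Fin n) ℂ) - A)⁻¹ * Γ⁻¹ * Cᴴ *
        (Matrix.fromBlocks 1 0 0 (-1) : Matrix (Fin p ⊕ Fin m) (Fin p ⊕ Fin m) ℂ)).det =
      (lam • (1 : Matrix (Fin n) (Fin n) ℂ) + Aᴴ).det /
        (lam • (1 : Matrix (Fin n) (Fin n) ℂ) - A).det := by
  set J : Matrix (Fin p ⊕ Fin m) (Fin p ⊕ Fin m) ℂ := Matrix.fromBlocks 1 0 0 (-1) with hJ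
  set M : Matrix (Fin n) (Fin n) ℂ := lam • (1 : Matrix (Fin n) (Fin n) ℂ) - A with hMdef
  have hMinv : M * M⁻¹ = 1 := Matrix.mul_nonsing_inv M hlam
  have hMinv' : M⁻¹ * M = 1 := Matrix.nonsing_inv_mul M hlam
  have hG : Γ * Γ⁻¹ = 1 := Matrix.mul_nonsing_inv Γ hΓinv
  have hG' : Γ⁻¹ * Γ = 1 := Matrix.nonsing_inv_mul Γ hΓinv
  have hX : Cᴴ * J * C = -(Γ * A + Aᴴ * Γ) := by rw [hLyap, neg_neg]
  set X : Matrix (Fin n) (Fin n) ℂ := Γ * A + Aᴴ * Γ with hXdef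
  have key : (1 - C * M⁻¹ * Γ⁻¹ * Cᴴ * J).det = (1 + M⁻¹ * (Γ⁻¹ * X)).det := by
    have h1 : 1 - C * M⁻¹ * Γ⁻¹ * Cᴴ * J = 1 + C * (-(M⁻¹ * Γ⁻¹ * Cᴴ * J)) := by
      simp only [sub_eq_add_neg, Matrix.mul_neg, Matrix.neg_mul, Matrix.mul_assoc]
    rw [h1, Matrix.det_one_add_mul_comm]
    congr 1
    have h2 : -(M⁻¹ * Γ⁻¹ * Cᴴ * J) * C = -(M⁻¹ * (Γ⁻¹ * (Cᴴ * J * C))) := by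
      simp only [Matrix.neg_mul, Matrix.mul_neg, Matrix.mul_assoc]
    rw [h2, hX]
    simp [Matrix.mul_neg]
  have hmain : Γ * M * (1 + M⁻¹ * (Γ⁻¹ * X)) =
      (lam • (1 : Matrix (Fin n) (Fin n) ℂ) + Aᴴ) * Γ := by
    have e1 : Γ * M * (1 + M⁻¹ * (Γ⁻¹ * X)) = Γ * M + X := by
      rw [Matrix.mul_add, mul_one]
      congr 1
      calc Γ * M * (M⁻¹ * (Γ⁻¹ * X)) = Γ * (M * M⁻¹) * (Γ⁻¹ * X) := by
            noncomm_ring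
        _ = Γ * Γ⁻¹ * X := by rw [hMinv, mul_one, ← mul_assoc]
        _ = X := by rw [hG, one_mul]
    rw [e1, hMdef, hXdef]
    rw [Matrix.mul_sub, Matrix.add_mul]
    simp only [mul_smul_comm, smul_mul_assoc, mul_one, one_mul]
    abel
  have hdet : Γ.det * M.det * (1 + M⁻¹ * (Γ⁻¹ * X)).det =
      (lam • (1 : Matrix (Fin n) (Fin n) ℂ) + Aᴴ).det * Γ.det := by
    rw [← Matrix.det_mul, ← Matrix.det_mul, ← Matrix.det_mul, hmain]
  have hM0 : M.det ≠ 0 := hlam.ne_zero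
  have hG0 : Γ.det ≠ 0 := hΓinv.ne_zero
  rw [key, eq_div_iff hM0]
  have h3 : M.det * (1 + M⁻¹ * (Γ⁻¹ * X)).det * Γ.det =
      (lam • (1 : Matrix (Fin n) (Fin n) ℂ) + Aᴴ).det * Γ.det := by
    linear_combination hdet
  have h4 := mul_right_cancel₀ hG0 h3
  linear_combination h4
end

section
/- Inverse formula for ψ: For every z ∈ ℂ such that both zI_n + Wᴴ and zI_n − W are invertible, the matrix ψ(z) := I_m − U P⁻¹ (zI_n + Wᴴ)⁻¹ Uᴴ is invertible and ψ(z)⁻¹ = I_m + U (zI_n − W)⁻¹ P⁻¹ Uᴴ. -/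
open Matrix
open scoped Matrix

/-- **Inverse formula for `ψ`.** With `PW + WᴴP = UᴴU` and `P` invertible, for every `z`
such that `zI + Wᴴ` and `zI − W` are invertible, the matrix
`ψ(z) = I − U P⁻¹ (zI + Wᴴ)⁻¹ Uᴴ` is invertible with inverse `I + U (zI − W)⁻¹ P⁻¹ Uᴴ`. -/
theorem psi_inverse_formula
    (n m : ℕ) (W : Matrix (Fin n) (Fin n) ℂ) (U : Matrix (Fin m) (Fin n) ℂ)
    (P : Matrix (Fin n) (Fin n) ℂ) (hP : IsUnit P.det)
    (hLyap : P * W + Wᴴ * P = Uᴴ * U)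
    (z : ℂ)
    (h1 : IsUnit (z • (1 : Matrix (Fin n) (Fin n) ℂ) + Wᴴ).det)
    (h2 : IsUnit (z • (1 : Matrix (Fin n) (Fin n) ℂ) - W).det) :
    let ψ : Matrix (Fin m) (Fin m) ℂ :=
      1 - U * P⁻¹ * (z • (1 : Matrix (Fin n) (Fin n) ℂ) + Wᴴ)⁻¹ * Uᴴ
    IsUnit ψ.det ∧
      ψ⁻¹ = 1 + U * (z • (1 : Matrix (Fin n) (Fin n) ℂ) - W)⁻¹ * P⁻¹ * Uᴴ := by
  intro ψ
  set A := z • (1 : Matrix (Fin n) (Fin n) ℂ) + Wᴴ with hAdef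
  set B := z • (1 : Matrix (Fin n) (Fin n) ℂ) - W with hBdef
  have hA : A⁻¹ * A = 1 := nonsing_inv_mul _ h1
  have hA' : A * A⁻¹ = 1 := mul_nonsing_inv _ h1
  have hB : B⁻¹ * B = 1 := nonsing_inv_mul _ h2
  have hB' : B * B⁻¹ = 1 := mul_nonsing_inv _ h2
  have hPi : P⁻¹ * P = 1 := nonsing_inv_mul _ hP
  have hPi' : P * P⁻¹ = 1 := mul_nonsing_inv _ hP
  have key : Uᴴ * U = A * P - P * B := by
    rw [← hLyap, hAdef, hBdef]
    simp [Matrix.add_mul, Matrix.mul_sub, Matrix.smul_mul, Matrix.mul_smul]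
    abel
  set X := U * P⁻¹ * A⁻¹ * Uᴴ with hXdef
  set Y := U * B⁻¹ * P⁻¹ * Uᴴ with hYdef
  set φ : Matrix (Fin m) (Fin m) ℂ := 1 + Y with hφdef
  have middle : P⁻¹ * (A⁻¹ * ((Uᴴ * U) * (B⁻¹ * P⁻¹))) = B⁻¹ * P⁻¹ - P⁻¹ * A⁻¹ := by
    rw [key]
    rw [Matrix.sub_mul, Matrix.mul_sub, Matrix.mul_sub]
    congr 1
    · calc P⁻¹ * (A⁻¹ * (A * P * (B⁻¹ * P⁻¹)))
          = P⁻¹ * ((A⁻¹ * A) * (P * (B⁻¹ * P⁻¹))) := by noncomm_ring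
        _ = B⁻¹ * P⁻¹ := by
            rw [hA, Matrix.one_mul, ← Matrix.mul_assoc, ← Matrix.mul_assoc, hPi,
              Matrix.one_mul]
    · calc P⁻¹ * (A⁻¹ * (P * B * (B⁻¹ * P⁻¹)))
          = P⁻¹ * (A⁻¹ * (P * ((B * B⁻¹) * P⁻¹))) := by noncomm_ring
        _ = P⁻¹ * A⁻¹ := by
            rw [hB', Matrix.one_mul, hPi', Matrix.mul_one]
  have hXY : X * Y = Y - X := by
    have h := congrArg (fun M => U * M * Uᴴ) middle
    simp only [Matrix.mul_sub, Matrix.sub_mul, Matrix.mul_assoc] at h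
    rw [hXdef, hYdef]
    simp only [Matrix.mul_assoc]
    exact h
  have hψ : ψ = 1 - X := rfl
  have hmul : ψ * φ = 1 := by
    rw [hψ, hφdef, Matrix.sub_mul, Matrix.mul_add, Matrix.mul_add, Matrix.one_mul,
      Matrix.mul_one, Matrix.one_mul, hXY]
    abel
  exact ⟨isUnit_det_of_right_inverse hmul, inv_eq_right_inv hmul⟩
end

section
/- Unitarity of ψ on the imaginary axis: Assume in addition that P is Hermitian. Then for every z ∈ ℂ with Re z = 0 such that zI_n + Wᴴ is invertible, the matrix ψ(z) := I_m − U P⁻¹ (zI_n + Wᴴ)⁻¹ Uᴴ is unitary: ψ(z)ᴴ ψ(z) = I_m and ψ(z) ψ(z)ᴴ = I_m. -/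
set_option maxHeartbeats 1000000


open Matrix
open scoped Matrix

/-- **Unitarity of `ψ` on the imaginary axis.** With `P` Hermitian invertible satisfying
`PW + WᴴP = UᴴU`, the matrix `ψ(z) = I − U P⁻¹ (zI + Wᴴ)⁻¹ Uᴴ` is unitary for every
purely imaginary `z` at which `zI + Wᴴ` is invertible. -/
theorem psi_unitary_on_imaginary_axis
    (n m : ℕ) (W : Matrix (Fin n) (Fin n) ℂ) (U : Matrix (Fin m) (Fin n) ℂ)
    (P : Matrix (Fin n) (Fin n) ℂ) (hP : IsUnit P.det) (hPH : P.IsHermitian)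
    (hLyap : P * W + Wᴴ * P = Uᴴ * U)
    (z : ℂ) (hz : z.re = 0)
    (h1 : IsUnit (z • (1 : Matrix (Fin n) (Fin n) ℂ) + Wᴴ).det) :
    let ψ : Matrix (Fin m) (Fin m) ℂ :=
      1 - U * P⁻¹ * (z • (1 : Matrix (Fin n) (Fin n) ℂ) + Wᴴ)⁻¹ * Uᴴ
    ψᴴ * ψ = 1 ∧ ψ * ψᴴ = 1 := by
  intro ψ
  set A : Matrix (Fin n) (Fin n) ℂ := z • (1 : Matrix (Fin n) (Fin n) ℂ) + Wᴴ with hAdef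
  have hzstar : star z = -z := by
    apply Complex.ext <;> simp [hz]
  have hAH : Aᴴ = (-z) • (1 : Matrix (Fin n) (Fin n) ℂ) + W := by
    simp [hAdef, conjTranspose_add, conjTranspose_smul, hzstar]
  have hW : W = Aᴴ + z • (1 : Matrix (Fin n) (Fin n) ℂ) := by
    rw [hAH]; module
  have hWH : Wᴴ = A - z • (1 : Matrix (Fin n) (Fin n) ℂ) := by
    rw [hAdef]; module
  have h2 : IsUnit (Aᴴ).det := by
    rw [det_conjTranspose]; exact h1.star
  have hAB : A * A⁻¹ = 1 := mul_nonsing_inv A h1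
  have hBA : A⁻¹ * A = 1 := nonsing_inv_mul A h1
  have hAB' : Aᴴ * (Aᴴ)⁻¹ = 1 := mul_nonsing_inv _ h2
  have hBA' : (Aᴴ)⁻¹ * Aᴴ = 1 := nonsing_inv_mul _ h2
  have hPQ : P * P⁻¹ = 1 := mul_nonsing_inv P hP
  have hQP : P⁻¹ * P = 1 := nonsing_inv_mul P hP
  have hQH : (P⁻¹)ᴴ = P⁻¹ := hPH.inv.eq
  have hBH : (A⁻¹)ᴴ = (Aᴴ)⁻¹ := conjTranspose_nonsing_inv A
  -- Key identity 2: UᴴU = P Aᴴ + A P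
  have key2 : Uᴴ * U = P * Aᴴ + A * P := by
    rw [← hLyap, hWH, hW]
    rw [mul_add, sub_mul]
    rw [Matrix.mul_smul, Matrix.smul_mul]
    simp only [Matrix.mul_one, Matrix.one_mul]
    abel
  -- Key identity 1: P⁻¹ (UᴴU) P⁻¹ = Aᴴ P⁻¹ + P⁻¹ A
  have key1 : P⁻¹ * (Uᴴ * U) * P⁻¹ = Aᴴ * P⁻¹ + P⁻¹ * A := by
    rw [key2, mul_add, add_mul]
    congr 1
    · rw [← mul_assoc, hQP, one_mul]
    · rw [mul_assoc, mul_assoc, hPQ, mul_one]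
  -- core identity for ψᴴψ
  have core1 : (Aᴴ)⁻¹ * (P⁻¹ * (Uᴴ * U) * P⁻¹) * A⁻¹
      = P⁻¹ * A⁻¹ + (Aᴴ)⁻¹ * P⁻¹ := by
    rw [key1, mul_add, add_mul]
    congr 1
    · rw [← mul_assoc, hBA', one_mul]
    · rw [mul_assoc, mul_assoc, hAB, mul_one]
  -- core identity for ψψᴴ
  have core2 : P⁻¹ * (A⁻¹ * (Uᴴ * U) * (Aᴴ)⁻¹) * P⁻¹
      = P⁻¹ * A⁻¹ + (Aᴴ)⁻¹ * P⁻¹ := by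
    have inner : A⁻¹ * (Uᴴ * U) * (Aᴴ)⁻¹ = A⁻¹ * P + P * (Aᴴ)⁻¹ := by
      rw [key2, mul_add, add_mul]
      congr 1
      · rw [mul_assoc, mul_assoc, hAB', mul_one]
      · rw [← mul_assoc, hBA, one_mul]
    rw [inner, mul_add, add_mul]
    congr 1
    · rw [mul_assoc, mul_assoc, hPQ, mul_one]
    · rw [← mul_assoc, hQP, one_mul]
  set X : Matrix (Fin m) (Fin m) ℂ := U * P⁻¹ * A⁻¹ * Uᴴ with hXdef
  have hXH : Xᴴ = U * (Aᴴ)⁻¹ * P⁻¹ * Uᴴ := by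
    rw [hXdef]
    simp only [conjTranspose_mul, conjTranspose_conjTranspose, hQH, hBH]
    simp only [Matrix.mul_assoc]
  have hXX : Xᴴ * X = X + Xᴴ := by
    have h := congrArg (fun M : Matrix (Fin n) (Fin n) ℂ => U * M * Uᴴ) core1
    simp only [Matrix.mul_add, Matrix.add_mul, Matrix.mul_assoc] at h
    rw [hXH, hXdef]
    simp only [Matrix.mul_assoc]
    exact h
  have hXX' : X * Xᴴ = X + Xᴴ := by
    have h := congrArg (fun M : Matrix (Fin n) (Fin n) ℂ => U * M * Uᴴ) core2
    simp only [Matrix.mul_add, Matrix.add_mul, Matrix.mul_assoc] at h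
    rw [hXH, hXdef]
    simp only [Matrix.mul_assoc]
    exact h
  have hpsi : ψ = 1 - X := rfl
  constructor
  · rw [hpsi, conjTranspose_sub, conjTranspose_one, sub_mul, mul_sub, mul_sub, hXX]
    simp only [Matrix.one_mul, Matrix.mul_one, one_mul, mul_one, ← hAdef, ← hXdef]
    abel
  · rw [hpsi, conjTranspose_sub, conjTranspose_one, sub_mul, mul_sub, mul_sub, hXX']
    simp only [Matrix.one_mul, Matrix.mul_one, one_mul, mul_one, ← hAdef, ← hXdef]
    abel
end

section
/- Determinant formula for ψ: For every z ∈ ℂ such that zI_n + Wᴴ is invertible, det(I_m − U P⁻¹ (zI_n + Wᴴ)⁻¹ Uᴴ) = det(zI_n − W)/det(zI_n + Wᴴ). -/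
open Matrix
open scoped Matrix

/-- **Determinant formula for `ψ`.** With `P` invertible satisfying `PW + WᴴP = UᴴU`,
for every `z` such that `zI + Wᴴ` is invertible,
`det(I − U P⁻¹ (zI + Wᴴ)⁻¹ Uᴴ) = det(zI − W)/det(zI + Wᴴ)`. -/
theorem psi_determinant_formula
    (n m : ℕ) (W : Matrix (Fin n) (Fin n) ℂ) (U : Matrix (Fin m) (Fin n) ℂ)
    (P : Matrix (Fin n) (Fin n) ℂ) (hP : IsUnit P.det)
    (hLyap : P * W + Wᴴ * P = Uᴴ * U)
    (z : ℂ)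
    (h1 : IsUnit (z • (1 : Matrix (Fin n) (Fin n) ℂ) + Wᴴ).det) :
    (1 - U * P⁻¹ * (z • (1 : Matrix (Fin n) (Fin n) ℂ) + Wᴴ)⁻¹ * Uᴴ).det =
      (z • (1 : Matrix (Fin n) (Fin n) ℂ) - W).det /
        (z • (1 : Matrix (Fin n) (Fin n) ℂ) + Wᴴ).det := by
  set A : Matrix (Fin n) (Fin n) ℂ := z • (1 : Matrix (Fin n) (Fin n) ℂ) + Wᴴ with hA
  have step1 : (1 - U * P⁻¹ * A⁻¹ * Uᴴ).det = (1 - (P⁻¹ * A⁻¹ * Uᴴ) * U).det := by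
    rw [show U * P⁻¹ * A⁻¹ * Uᴴ = U * (P⁻¹ * A⁻¹ * Uᴴ) by
      rw [Matrix.mul_assoc, Matrix.mul_assoc, Matrix.mul_assoc],
      det_one_sub_mul_comm]
  have key : 1 - (P⁻¹ * A⁻¹ * Uᴴ) * U = P⁻¹ * A⁻¹ * (P * (z • (1 : Matrix (Fin n) (Fin n) ℂ) - W)) := by
    have h2 : P * (z • (1 : Matrix (Fin n) (Fin n) ℂ) - W) = A * P - Uᴴ * U := by
      rw [← hLyap, hA]
      noncomm_ring
    have h3 : P⁻¹ * A⁻¹ * (A * P) = 1 := by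
      rw [Matrix.mul_assoc, ← Matrix.mul_assoc A⁻¹, Matrix.nonsing_inv_mul A h1,
        Matrix.one_mul, Matrix.nonsing_inv_mul P hP]
    rw [h2, Matrix.mul_sub, h3, Matrix.mul_assoc, Matrix.mul_assoc]
  have hP0 : P.det ≠ 0 := hP.ne_zero
  have hA0 : A.det ≠ 0 := h1.ne_zero
  rw [step1, key, det_mul, det_mul, det_mul, det_nonsing_inv, det_nonsing_inv,
    Ring.inverse_eq_inv, Ring.inverse_eq_inv]
  field_simp
end

section
/- Sylvester equation for the simple-multiplicity coupling matrix: Assume the compatibility condition x_i v_j = y_i u_j whenever z_i = w_j. Define Γ ∈ ℂ^{N×N'} by Γ_{ij} := (x_i v_j − y_i u_j)/(w_j − z_i) if z_i ≠ w_j and Γ_{ij} := ρ_{ij} if z_i = w_j, and set Z := diag(z_1,…,z_N), W := diag(w_1,…,w_{N'}), X ∈ ℂ^{N×p} with rows x_i, Y ∈ ℂ^{N×m} with rows y_i, U ∈ ℂ^{m×N'} with columns u_j, V ∈ ℂ^{p×N'} with columns v_j. Then ΓW − ZΓ = XV − YU. -/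
open Matrix
open scoped Matrix Classical

/-- **Sylvester equation for the simple-multiplicity coupling matrix.**
Under the compatibility condition `x_i v_j = y_i u_j` whenever `z_i = w_j`, the coupling
matrix `Γ` satisfies `ΓW − ZΓ = XV − YU`. -/
theorem coupling_matrix_sylvester
    (p m N N' : ℕ)
    (z : Fin N → ℂ) (w : Fin N' → ℂ)
    (x : Fin N → Fin p → ℂ) (y : Fin N → Fin m → ℂ)
    (u : Fin N' → Fin m → ℂ) (v : Fin N' → Fin p → ℂ)
    (ρ : Fin N → Fin N' → ℂ)
    (hcompat : ∀ i j, z i = w j → x i ⬝ᵥ v j = y i ⬝ᵥ u j) :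
    let Γ : Matrix (Fin N) (Fin N') ℂ :=
      Matrix.of fun i j =>
        if z i = w j then ρ i j else (x i ⬝ᵥ v j - y i ⬝ᵥ u j) / (w j - z i)
    let Z : Matrix (Fin N) (Fin N) ℂ := Matrix.diagonal z
    let W : Matrix (Fin N') (Fin N') ℂ := Matrix.diagonal w
    let X : Matrix (Fin N) (Fin p) ℂ := Matrix.of x
    let Y : Matrix (Fin N) (Fin m) ℂ := Matrix.of y
    let U : Matrix (Fin m) (Fin N') ℂ := Matrix.of fun k j => u j k
    let V : Matrix (Fin p) (Fin N') ℂ := Matrix.of fun k j => v j k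
    Γ * W - Z * Γ = X * V - Y * U := by
  intro Γ Z W X Y U V
  ext i j
  rw [Matrix.sub_apply, Matrix.sub_apply, Matrix.mul_diagonal, Matrix.diagonal_mul]
  have hXV : (X * V) i j = x i ⬝ᵥ v j := rfl
  have hYU : (Y * U) i j = y i ⬝ᵥ u j := rfl
  rw [hXV, hYU]
  show (if z i = w j then ρ i j else (x i ⬝ᵥ v j - y i ⬝ᵥ u j) / (w j - z i)) * w j -
    z i * (if z i = w j then ρ i j else (x i ⬝ᵥ v j - y i ⬝ᵥ u j) / (w j - z i)) = _
  by_cases h : z i = w j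
  · rw [if_pos h, h, hcompat i j h]; ring
  · rw [if_neg h]
    have hne : w j - z i ≠ 0 := sub_ne_zero.mpr (Ne.symm h)
    field_simp
end
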